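/- arXiv:2502.15061 — 7 statements merged into one kernel-verified Lean document; each statement's English description precedes it below -/
import Mathlib

section
/- Let V = W × D be a direct product of finite-dimensional real vector spaces, let θ be the pullback to V under the projection V → W of a volume form on W (a nonzero exterior form of top degree dim W), and let ζ be the pullback to V under the projection V → D of an indivisible exterior form on D. Then the divisibility space of the exterior form μ = θ ∧ ζ on V equals {0} × D. -/
set_option synthInstance.maxHeartbeats 1000000
set_option maxHeartbeats 1000000

open ExteriorAlgebra in
/-- The subspace of functionals `ξ ∈ V*` dividing `μ`, i.e. with `ξ ∧ μ = 0`. -/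
noncomputable def divForms (V : Type*) [AddCommGroup V] [Module ℝ V]
    (μ : ExteriorAlgebra ℝ (Module.Dual ℝ V)) : Submodule ℝ (Module.Dual ℝ V) :=
  LinearMap.ker ((LinearMap.mulRight ℝ μ).comp (ExteriorAlgebra.ι ℝ))

/-- The divisibility space of `μ`: all `v ∈ V` annihilated by every functional `ξ`
with `ξ ∧ μ = 0`. -/
noncomputable def divSpace (V : Type*) [AddCommGroup V] [Module ℝ V]
    (μ : ExteriorAlgebra ℝ (Module.Dual ℝ V)) : Submodule ℝ V :=
  (divForms V μ).dualCoannihilator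

namespace DivisibilityAux

open ExteriorAlgebra

variable {M : Type*} [AddCommGroup M] [Module ℝ M]

/-- Induction principle for homogeneous elements of the exterior algebra. -/
lemma pow_induction' {P : ℕ → ExteriorAlgebra ℝ M → Prop}
    (hzero : ∀ k, P k 0)
    (hadd : ∀ k x y, P k x → P k y → P k (x + y))
    (hsmul : ∀ k (c : ℝ) x, P k x → P k (c • x))
    (hone : P 0 1)
    (hstep : ∀ k (m : M) x, x ∈ ⋀[ℝ]^k M → P k x → P (k+1) (ι ℝ m * x)) :
    ∀ k x, x ∈ ⋀[ℝ]^k M → P k x := by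
  intro k
  induction k with
  | zero =>
    intro x hx
    rw [show ⋀[ℝ]^0 M = 1 from pow_zero _] at hx
    obtain ⟨r, rfl⟩ := Submodule.mem_one.mp hx
    rw [Algebra.algebraMap_eq_smul_one]
    exact hsmul 0 r 1 hone
  | succ k ih =>
    intro x hx
    rw [← ιMulti_span_fixedDegree] at hx
    induction hx using Submodule.span_induction with
    | mem a ha =>
      obtain ⟨v, rfl⟩ := ha
      rw [ιMulti_succ_apply]
      exact hstep k (v 0) _ (ιMulti_range ℝ k (Set.mem_range_self _)) (ih _ (ιMulti_range ℝ k (Set.mem_range_self _)))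
    | zero => exact hzero _
    | add a b _ _ ha hb => exact hadd _ _ _ ha hb
    | smul c a _ ha => exact hsmul _ c a ha
variable {M N : Type*} [AddCommGroup M] [Module ℝ M] [AddCommGroup N] [Module ℝ N]

lemma ι_mem_pow_one (m : M) : ι ℝ m ∈ ⋀[ℝ]^1 M := by
  rw [show ⋀[ℝ]^1 M = LinearMap.range (ι ℝ (M := M)) from pow_one _]
  exact ⟨m, rfl⟩

lemma pow_eq_bot_of_top [FiniteDimensional ℝ M] {k : ℕ} (hk : Module.finrank ℝ M < k) :
    ⋀[ℝ]^k M = ⊥ := by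
  rw [eq_bot_iff, ← ιMulti_span_fixedDegree, Submodule.span_le]
  rintro _ ⟨v, rfl⟩
  have : ¬ LinearIndependent ℝ v := fun h => by
    have := LinearIndependent.fintype_card_le_finrank h
    simp only [Fintype.card_fin] at this
    omega
  simp [AlternatingMap.map_linearDependent _ v this]

lemma map_mem_pow (h : M →ₗ[ℝ] N) {k : ℕ} {x : ExteriorAlgebra ℝ M} (hx : x ∈ ⋀[ℝ]^k M) :
    map h x ∈ ⋀[ℝ]^k N := by
  refine pow_induction' (P := fun k x => map h x ∈ ⋀[ℝ]^k N) ?_ ?_ ?_ ?_ ?_ k x hx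
  · intro k; simp
  · intro k x y hx hy; rw [map_add]; exact add_mem hx hy
  · intro k c x hx; rw [map_smul]; exact Submodule.smul_mem _ _ hx
  · show map h 1 ∈ ⋀[ℝ]^0 N
    rw [map_one, show ⋀[ℝ]^0 N = 1 from pow_zero _]
    exact Submodule.mem_one.mpr ⟨1, map_one _⟩
  · intro k m x _ hx
    rw [map_mul, map_apply_ι]
    have := SetLike.mul_mem_graded (ι_mem_pow_one (h m)) hx
    rwa [add_comm] at this

lemma contract_map (h : M →ₗ[ℝ] N) (d : Module.Dual ℝ N) {k : ℕ} {x : ExteriorAlgebra ℝ M}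
    (hx : x ∈ ⋀[ℝ]^k M) :
    CliffordAlgebra.contractLeft d (map h x)
      = map h (CliffordAlgebra.contractLeft (h.dualMap d) x) := by
  refine pow_induction' (P := fun _ x => CliffordAlgebra.contractLeft d (map h x)
      = map h (CliffordAlgebra.contractLeft (h.dualMap d) x)) ?_ ?_ ?_ ?_ ?_ k x hx
  · intro k; simp
  · intro k x y hx hy; simp only [map_add, hx, hy]
  · intro k c x hx; simp only [map_smul, hx]
  · show CliffordAlgebra.contractLeft d (map h 1)
      = map h (CliffordAlgebra.contractLeft (h.dualMap d) 1)
    simp [CliffordAlgebra.contractLeft_one]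
  · intro k m x _ ih
    show CliffordAlgebra.contractLeft d (map h (ι ℝ m * x))
      = map h (CliffordAlgebra.contractLeft (h.dualMap d) (ι ℝ m * x))
    rw [map_mul, map_apply_ι, CliffordAlgebra.contractLeft_ι_mul,
      CliffordAlgebra.contractLeft_ι_mul, map_sub, map_smul, map_mul, map_apply_ι, ih,
      LinearMap.dualMap_apply]

lemma contract_mem (d : Module.Dual ℝ M) {k : ℕ} {x : ExteriorAlgebra ℝ M}
    (hx : x ∈ ⋀[ℝ]^k M) :
    CliffordAlgebra.contractLeft d x ∈ ⋀[ℝ]^(k-1) M := by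
  refine pow_induction' (P := fun k x => CliffordAlgebra.contractLeft d x ∈ ⋀[ℝ]^(k-1) M)
    ?_ ?_ ?_ ?_ ?_ k x hx
  · intro k; simp
  · intro k x y hx hy; rw [map_add]; exact add_mem hx hy
  · intro k c x hx; rw [map_smul]; exact Submodule.smul_mem _ _ hx
  · show CliffordAlgebra.contractLeft d (1 : ExteriorAlgebra ℝ M) ∈ ⋀[ℝ]^(0-1) M
    rw [CliffordAlgebra.contractLeft_one]; exact zero_mem _
  · intro k m x hxk ih
    show CliffordAlgebra.contractLeft d (ι ℝ m * x) ∈ ⋀[ℝ]^(k+1-1) M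
    rw [CliffordAlgebra.contractLeft_ι_mul]
    simp only [Nat.add_sub_cancel]
    refine sub_mem (Submodule.smul_mem _ _ hxk) ?_
    rcases k with _ | k
    · have hx0 : CliffordAlgebra.contractLeft d x = 0 := by
        rw [show ⋀[ℝ]^0 M = 1 from pow_zero _] at hxk
        obtain ⟨r, rfl⟩ := Submodule.mem_one.mp hxk
        exact CliffordAlgebra.contractLeft_algebraMap _ _ r
      rw [hx0, mul_zero]; exact zero_mem _
    · have := SetLike.mul_mem_graded (ι_mem_pow_one m) ih
      simpa [Nat.add_sub_cancel, add_comm] using this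

lemma contract_mul (d : Module.Dual ℝ M) {k : ℕ} {x : ExteriorAlgebra ℝ M}
    (hx : x ∈ ⋀[ℝ]^k M) (y : ExteriorAlgebra ℝ M) :
    CliffordAlgebra.contractLeft d (x * y)
      = CliffordAlgebra.contractLeft d x * y
        + ((-1 : ℝ)^k) • (x * CliffordAlgebra.contractLeft d y) := by
  refine pow_induction' (P := fun k x => ∀ y, CliffordAlgebra.contractLeft d (x * y)
      = CliffordAlgebra.contractLeft d x * y
        + ((-1 : ℝ)^k) • (x * CliffordAlgebra.contractLeft d y)) ?_ ?_ ?_ ?_ ?_ k x hx y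
  · intro k y; simp
  · intro k x x' hx hx' y
    simp only [add_mul, map_add, hx y, hx' y, smul_add]; abel
  · intro k c x hx y
    rw [smul_mul_assoc, map_smul, hx y, map_smul]
    simp only [smul_mul_assoc, smul_add]
    module
  · intro y
    simp [CliffordAlgebra.contractLeft_one]
  · intro k m x _ ih y
    rw [mul_assoc, CliffordAlgebra.contractLeft_ι_mul, CliffordAlgebra.contractLeft_ι_mul, ih y]
    simp only [mul_add, mul_sub, sub_mul, smul_mul_assoc, mul_smul_comm, mul_assoc, pow_succ]
    module

/-- Sequential contraction by a tuple of elements of the double dual. -/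
noncomputable def seqC {P : Type*} [AddCommGroup P] [Module ℝ P] :
    ∀ (m : ℕ), (Fin m → Module.Dual ℝ P) → ExteriorAlgebra ℝ P →ₗ[ℝ] ExteriorAlgebra ℝ P
  | 0, _ => LinearMap.id
  | m+1, D => (seqC m (Matrix.vecTail D)).comp (CliffordAlgebra.contractLeft (D 0))

@[simp] lemma seqC_zero {P : Type*} [AddCommGroup P] [Module ℝ P]
    (D : Fin 0 → Module.Dual ℝ P) (z : ExteriorAlgebra ℝ P) : seqC 0 D z = z := rfl

lemma seqC_succ {P : Type*} [AddCommGroup P] [Module ℝ P] (m : ℕ)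
    (D : Fin (m+1) → Module.Dual ℝ P) (z : ExteriorAlgebra ℝ P) :
    seqC (m+1) D z = seqC m (Matrix.vecTail D) (CliffordAlgebra.contractLeft (D 0) z) := rfl

lemma seqC_ι_mul {P : Type*} [AddCommGroup P] [Module ℝ P] (m : ℕ)
    (D : Fin m → Module.Dual ℝ P) (p : P) (hp : ∀ i, D i p = 0) (z : ExteriorAlgebra ℝ P) :
    seqC m D (ι ℝ p * z) = ((-1 : ℝ)^m) • (ι ℝ p * seqC m D z) := by
  induction m generalizing z with
  | zero => simp
  | succ m ih =>
    rw [seqC_succ, seqC_succ, CliffordAlgebra.contractLeft_ι_mul, hp 0, zero_smul, zero_sub,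
      map_neg, ih (Matrix.vecTail D) (fun i => hp i.succ) _, pow_succ]
    simp [smul_smul, mul_comm]

lemma contract_ιMulti_zero {P : Type*} [AddCommGroup P] [Module ℝ P]
    (d : Module.Dual ℝ P) (n : ℕ) (φ : Fin n → P) (h : ∀ i, d (φ i) = 0) :
    CliffordAlgebra.contractLeft d (ιMulti ℝ n φ) = 0 := by
  induction n with
  | zero => rw [ιMulti_zero_apply]; exact CliffordAlgebra.contractLeft_one _ _
  | succ n ih =>
    rw [ιMulti_succ_apply, CliffordAlgebra.contractLeft_ι_mul, h 0, zero_smul, zero_sub,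
      ih (Matrix.vecTail φ) (fun i => h i.succ), mul_zero, neg_zero]

lemma seqC_ιMulti_dual {P : Type*} [AddCommGroup P] [Module ℝ P] (n : ℕ)
    (φ : Fin n → Module.Dual ℝ P) (v : Fin n → P)
    (h : ∀ i j, φ i (v j) = if i = j then 1 else 0) :
    seqC n (fun i => Module.Dual.eval ℝ P (v i)) (ιMulti ℝ n φ) = 1 := by
  induction n with
  | zero => rw [ιMulti_zero_apply]; rfl
  | succ n ih =>
    rw [seqC_succ, ιMulti_succ_apply, CliffordAlgebra.contractLeft_ι_mul]
    have h0 : (Module.Dual.eval ℝ P (v 0)) (φ 0) = 1 := by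
      rw [Module.Dual.eval_apply, h 0 0, if_pos rfl]
    have hz : CliffordAlgebra.contractLeft (Module.Dual.eval ℝ P (v 0))
        (ιMulti ℝ n (Matrix.vecTail φ)) = 0 := by
      refine contract_ιMulti_zero _ n _ (fun i => ?_)
      rw [Module.Dual.eval_apply]
      show φ i.succ (v 0) = 0
      rw [h i.succ 0, if_neg (by simp [Fin.succ_ne_zero])]
    rw [h0, hz, mul_zero, sub_zero, one_smul]
    have : Matrix.vecTail (fun i => Module.Dual.eval ℝ P (v i))
        = fun i : Fin n => Module.Dual.eval ℝ P (Matrix.vecTail v i) := rfl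
    rw [this]
    refine ih _ _ (fun i j => ?_)
    show φ i.succ (v j.succ) = _
    rw [h i.succ j.succ]
    simp [Fin.succ_inj]

lemma top_mem_span (n : ℕ) (b : Module.Basis (Fin n) ℝ M) {x : ExteriorAlgebra ℝ (Module.Dual ℝ M)}
    (hx : x ∈ ⋀[ℝ]^n (Module.Dual ℝ M)) :
    x ∈ Submodule.span ℝ {ιMulti ℝ n (fun i => b.dualBasis i)} := by
  rw [← ιMulti_span_fixedDegree] at hx
  induction hx using Submodule.span_induction with
  | zero => exact zero_mem _
  | add a b _ _ ha hb => exact add_mem ha hb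
  | smul c a _ ha => exact Submodule.smul_mem _ _ ha
  | mem a ha =>
    obtain ⟨φ, rfl⟩ := ha
    have expand : (ιMulti ℝ n) φ
        = (ιMulti ℝ n (M := Module.Dual ℝ M)) (fun i => ∑ j, φ i (b j) • b.dualBasis j) := by
      congr 1
      funext i
      rw [← b.dualBasis.sum_repr (φ i)]
      simp [Module.Basis.dualBasis_repr]
    rw [expand]
    have hsum := MultilinearMap.map_sum (ιMulti ℝ n (M := Module.Dual ℝ M)).toMultilinearMap
      (g := fun i j => φ i (b j) • b.dualBasis j)
    rw [AlternatingMap.coe_multilinearMap] at hsum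
    rw [hsum]
    refine Submodule.sum_mem _ (fun r _ => ?_)
    have hterm := MultilinearMap.map_smul_univ
      (ιMulti ℝ n (M := Module.Dual ℝ M)).toMultilinearMap
      (fun i => φ i (b (r i))) (fun i => b.dualBasis (r i))
    rw [AlternatingMap.coe_multilinearMap] at hterm
    rw [hterm]
    refine Submodule.smul_mem _ _ ?_
    by_cases hr : Function.Injective r
    · have hbij : Function.Bijective r := Finite.injective_iff_bijective.mp hr
      set σ : Equiv.Perm (Fin n) := Equiv.ofBijective r hbij with hσ
      have : (fun i => b.dualBasis (r i)) = (fun i => b.dualBasis i) ∘ σ := rfl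
      rw [this, AlternatingMap.map_perm, Units.smul_def]
      exact Submodule.smul_of_tower_mem _ _ (Submodule.mem_span_singleton_self _)
    · have hnot : ¬ Function.Injective (fun i => b.dualBasis (r i)) := by
        intro h
        exact hr fun i j hij => h (show b.dualBasis (r i) = b.dualBasis (r j) from congrArg _ hij)
      rw [AlternatingMap.map_eq_zero_of_not_injective _ _ hnot]
      exact zero_mem _

lemma seqC_map_mul {W U : Type*} [AddCommGroup W] [Module ℝ W] [AddCommGroup U] [Module ℝ U]
    (m : ℕ) {x : ExteriorAlgebra ℝ (Module.Dual ℝ W)} (hx : x ∈ ⋀[ℝ]^m (Module.Dual ℝ W))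
    (v : Fin m → W) {r : ℕ} {z : ExteriorAlgebra ℝ (Module.Dual ℝ U)}
    (hz : z ∈ ⋀[ℝ]^r (Module.Dual ℝ U)) :
    seqC m (fun i => Module.Dual.eval ℝ (W × U) (v i, 0))
        (map (LinearMap.fst ℝ W U).dualMap x * map (LinearMap.snd ℝ W U).dualMap z)
      = map (LinearMap.fst ℝ W U).dualMap
          (seqC m (fun i => Module.Dual.eval ℝ W (v i)) x)
        * map (LinearMap.snd ℝ W U).dualMap z := by
  induction m generalizing x with
  | zero => simp
  | succ m ih =>
    set f := (LinearMap.fst ℝ W U).dualMap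
    set g := (LinearMap.snd ℝ W U).dualMap
    set d := Module.Dual.eval ℝ (W × U) (v 0, 0) with hd
    rw [seqC_succ, seqC_succ]
    have hfx : map f x ∈ ⋀[ℝ]^m.succ (Module.Dual ℝ (W × U)) := map_mem_pow f hx
    rw [contract_mul d hfx]
    -- the second summand vanishes
    have hgz : CliffordAlgebra.contractLeft d (map g z) = 0 := by
      rw [contract_map g d hz]
      have : g.dualMap d = 0 := by
        ext η
        show (g η) (v 0, 0) = 0
        simp [g]
      rw [this, map_zero, LinearMap.zero_apply, map_zero]
    rw [hgz, mul_zero, smul_zero, add_zero]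
    -- identify the contraction of the pullback
    have hdf : f.dualMap d = Module.Dual.eval ℝ W (v 0) := by
      ext φ
      show (f φ) (v 0, 0) = φ (v 0)
      simp [f]
    rw [contract_map f d hx, hdf]
    have hmem : CliffordAlgebra.contractLeft (Module.Dual.eval ℝ W (v 0)) x
        ∈ ⋀[ℝ]^m (Module.Dual ℝ W) := by
      have := contract_mem (Module.Dual.eval ℝ W (v 0)) hx
      simpa using this
    have htail : Matrix.vecTail (fun i : Fin (m+1) => Module.Dual.eval ℝ (W × U) (v i, 0))
        = fun i : Fin m => Module.Dual.eval ℝ (W × U) (Matrix.vecTail v i, 0) := rfl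
    have htail2 : Matrix.vecTail (fun i : Fin (m+1) => Module.Dual.eval ℝ W (v i))
        = fun i : Fin m => Module.Dual.eval ℝ W (Matrix.vecTail v i) := rfl
    rw [htail, htail2]
    exact ih hmem (Matrix.vecTail v)

lemma mem_divForms {V : Type*} [AddCommGroup V] [Module ℝ V]
    (μ : ExteriorAlgebra ℝ (Module.Dual ℝ V)) (ξ : Module.Dual ℝ V) :
    ξ ∈ divForms V μ ↔ ι ℝ ξ * μ = 0 := by
  rw [divForms, LinearMap.mem_ker, LinearMap.comp_apply, LinearMap.mulRight_apply]

lemma divForms_eq (W U : Type*) [AddCommGroup W] [Module ℝ W] [FiniteDimensional ℝ W]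
    [AddCommGroup U] [Module ℝ U] [FiniteDimensional ℝ U]
    (θ₀ : ExteriorAlgebra ℝ (Module.Dual ℝ W))
    (hθdeg : θ₀ ∈ ⋀[ℝ]^(Module.finrank ℝ W) (Module.Dual ℝ W))
    (hθ0 : θ₀ ≠ 0)
    (r : ℕ) (ζ₀ : ExteriorAlgebra ℝ (Module.Dual ℝ U))
    (hζdeg : ζ₀ ∈ ⋀[ℝ]^r (Module.Dual ℝ U))
    (hζind : ∀ η : Module.Dual ℝ U, η ≠ 0 → ExteriorAlgebra.ι ℝ η * ζ₀ ≠ 0) :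
    divForms (W × U)
        ((ExteriorAlgebra.map (LinearMap.fst ℝ W U).dualMap) θ₀ *
          (ExteriorAlgebra.map (LinearMap.snd ℝ W U).dualMap) ζ₀)
      = LinearMap.range (LinearMap.fst ℝ W U).dualMap := by
  classical
  set f := (LinearMap.fst ℝ W U).dualMap with hf
  set g := (LinearMap.snd ℝ W U).dualMap with hg
  set θ := map f θ₀ with hθ
  set ζ := map g ζ₀ with hζ
  set n := Module.finrank ℝ W with hn
  have key1 : ∀ φ : Module.Dual ℝ W, ι ℝ (f φ) * (θ * ζ) = 0 := by
    intro φ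
    have h2 : ι ℝ φ * θ₀ ∈ ⋀[ℝ]^(1+n) (Module.Dual ℝ W) :=
      SetLike.mul_mem_graded (ι_mem_pow_one φ) hθdeg
    have h3 : ⋀[ℝ]^(1+n) (Module.Dual ℝ W) = ⊥ :=
      pow_eq_bot_of_top (by rw [Subspace.dual_finrank_eq]; omega)
    have h4 : ι ℝ φ * θ₀ = 0 := by rw [h3] at h2; simpa using h2
    rw [← mul_assoc, hθ, ← map_apply_ι f φ, ← map_mul, h4, map_zero, zero_mul]
  have key2 : ∀ η : Module.Dual ℝ U, ι ℝ (g η) * (θ * ζ) = 0 → η = 0 := by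
    intro η hη
    by_contra hne
    let b : Module.Basis (Fin n) ℝ W := Module.finBasis ℝ W
    obtain ⟨c, hc⟩ := Submodule.mem_span_singleton.mp (top_mem_span n b hθdeg)
    have hc0 : c ≠ 0 := by rintro rfl; rw [zero_smul] at hc; exact hθ0 hc.symm
    set D := fun i : Fin n => Module.Dual.eval ℝ (W × U) (b i, 0) with hD
    have hDη : ∀ i, D i (g η) = 0 := fun i => by
      show (g η) (b i, 0) = 0
      simp [hg]
    have h0 : seqC n D (ι ℝ (g η) * (θ * ζ)) = 0 := by rw [hη, map_zero]
    rw [seqC_ι_mul n D (g η) hDη (θ * ζ)] at h0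
    have hseq : seqC n D (θ * ζ) = c • ζ := by
      rw [hD, hθ, hζ, seqC_map_mul n hθdeg (fun i => b i) hζdeg]
      have hins : seqC n (fun i => Module.Dual.eval ℝ W (b i)) θ₀ = c • 1 := by
        rw [← hc, map_smul, seqC_ιMulti_dual n _ (fun i => b i)
          (fun i j => by rw [Module.Basis.dualBasis_apply_self]; simp [eq_comm])]
      rw [hins]
      simp [smul_mul_assoc, hg]
    rw [hseq] at h0
    have h5 : ι ℝ (g η) * ζ = 0 := by
      have := h0
      rw [mul_smul_comm, smul_smul] at this
      have hne2 : (-1 : ℝ)^n * c ≠ 0 := by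
        exact mul_ne_zero (pow_ne_zero _ (by norm_num)) hc0
      exact (smul_eq_zero.mp this).resolve_left hne2
    have h6 : map g (ι ℝ η * ζ₀) = 0 := by
      rw [map_mul, map_apply_ι]; exact h5
    have hinj : Function.Injective (map g : ExteriorAlgebra ℝ (Module.Dual ℝ U) → _) := by
      refine map_injective ⟨(LinearMap.inr ℝ W U).dualMap, ?_⟩
      ext η' u
      simp [hg]
    exact hζind η hne (by simpa using hinj (h6.trans (map_zero (map g)).symm))
  apply le_antisymm
  · intro ξ hξ
    rw [mem_divForms] at hξ
    set φ := (LinearMap.inl ℝ W U).dualMap ξ with hφ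
    set η := (LinearMap.inr ℝ W U).dualMap ξ with hηd
    have hdec : f φ + g η = ξ := by
      ext x <;> simp [hf, hg, hφ, hηd] <;> exact map_zero ξ
    have hgη : ι ℝ (g η) * (θ * ζ) = 0 := by
      rw [← hdec, map_add, add_mul, key1 φ, zero_add] at hξ
      exact hξ
    have hη0 := key2 η hgη
    refine ⟨φ, ?_⟩
    rw [← hdec, hη0, map_zero, add_zero]
  · rintro _ ⟨φ, rfl⟩
    rw [mem_divForms]
    exact key1 φ

end DivisibilityAux

open ExteriorAlgebra DivisibilityAux in
/-- For `V = W × U`, if `θ` is the pullback to `V` of a volume form on `W`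
(a nonzero form of top degree `dim W`) and `ζ` is the pullback to `V` of an indivisible
exterior form on `U`, then the divisibility space of `μ = θ ∧ ζ` is `{0} × U`. -/
theorem stmt1 (W U : Type*) [AddCommGroup W] [Module ℝ W] [FiniteDimensional ℝ W]
    [AddCommGroup U] [Module ℝ U] [FiniteDimensional ℝ U]
    (θ₀ : ExteriorAlgebra ℝ (Module.Dual ℝ W))
    (hθdeg : θ₀ ∈ ⋀[ℝ]^(Module.finrank ℝ W) (Module.Dual ℝ W))
    (hθ0 : θ₀ ≠ 0)
    (r : ℕ) (ζ₀ : ExteriorAlgebra ℝ (Module.Dual ℝ U))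
    (hζdeg : ζ₀ ∈ ⋀[ℝ]^r (Module.Dual ℝ U))
    (hζind : ∀ η : Module.Dual ℝ U, η ≠ 0 → ExteriorAlgebra.ι ℝ η * ζ₀ ≠ 0) :
    divSpace (W × U)
        ((ExteriorAlgebra.map (LinearMap.fst ℝ W U).dualMap) θ₀ *
          (ExteriorAlgebra.map (LinearMap.snd ℝ W U).dualMap) ζ₀)
      = (⊥ : Submodule ℝ W).prod (⊤ : Submodule ℝ U) := by
  rw [divSpace, divForms_eq W U θ₀ hθdeg hθ0 r ζ₀ hζdeg hζind]
  ext x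
  simp only [Submodule.mem_dualCoannihilator, Submodule.mem_prod, Submodule.mem_bot,
    Submodule.mem_top, and_true]
  constructor
  · intro h
    rw [← Module.forall_dual_apply_eq_zero_iff ℝ x.1]
    intro φ
    simpa using h ((LinearMap.fst ℝ W U).dualMap φ) (LinearMap.mem_range_self _ φ)
  · rintro h ξ ⟨φ, rfl⟩
    show φ x.1 = 0
    rw [h, map_zero]
end

section
/- Let V be a six-dimensional real vector space, let ξ¹, …, ξ⁶ be a basis of V*, and let μ = ξ¹ ∧ ξ² ∧ ξ³ + ξ³ ∧ ξ⁴ ∧ ξ⁵ + ξ⁵ ∧ ξ⁶ ∧ ξ¹. Then the set H′ of all ξ ∈ V* for which the 4-form ξ ∧ μ is decomposable (i.e., equals η¹ ∧ η² ∧ η³ ∧ η⁴ for some η¹, …, η⁴ ∈ V*) is exactly the linear span of ξ¹, ξ³, ξ⁵. -/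
set_option synthInstance.maxHeartbeats 1000000
set_option maxHeartbeats 1000000

section Stmt6Aux

variable {M : Type*} [AddCommGroup M] [Module ℝ M]

local notation "ιι" => ExteriorAlgebra.ι ℝ
local infixl:70 "⌋" => CliffordAlgebra.contractLeft (Q := (0 : QuadraticForm ℝ M))

private theorem stmt6_swap (x y : M) : ιι x * ιι y = -(ιι y * ιι x) :=
  eq_neg_of_add_eq_zero_left (ExteriorAlgebra.ι_add_mul_swap x y)

private theorem stmt6_swap3 (x y : M) (u : ExteriorAlgebra ℝ M) :
    ιι x * (ιι y * u) = -(ιι y * (ιι x * u)) := by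
  rw [← mul_assoc, stmt6_swap, neg_mul, mul_assoc]

private theorem stmt6_zz (x : M) (u : ExteriorAlgebra ℝ M) : ιι x * (ιι x * u) = 0 := by
  rw [← mul_assoc, ExteriorAlgebra.ι_sq_zero, zero_mul]

private theorem stmt6_z1 (a b c d : M) : ιι a * (ιι a * (ιι b * (ιι c * ιι d))) = 0 :=
  stmt6_zz _ _

private theorem stmt6_z2 (a b c d : M) : ιι b * (ιι a * (ιι b * (ιι c * ιι d))) = 0 := by
  rw [← mul_assoc, stmt6_swap b a, neg_mul, mul_assoc, stmt6_zz]; simp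

private theorem stmt6_z3 (a b c d : M) : ιι c * (ιι a * (ιι b * (ιι c * ιι d))) = 0 := by
  rw [← mul_assoc, stmt6_swap c a, neg_mul, mul_assoc, ← mul_assoc (ιι c), stmt6_swap c b,
    neg_mul, mul_assoc, stmt6_zz]; simp

private theorem stmt6_z4 (a b c d : M) : ιι d * (ιι a * (ιι b * (ιι c * ιι d))) = 0 := by
  have h : ιι d * (ιι c * ιι d) = 0 := by
    rw [← mul_assoc, stmt6_swap d c, neg_mul, mul_assoc, ExteriorAlgebra.ι_sq_zero]; simp
  rw [← mul_assoc, stmt6_swap d a, neg_mul, mul_assoc, ← mul_assoc (ιι d), stmt6_swap d b,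
    neg_mul, mul_assoc, h]; simp

private theorem stmt6_key (a b c d : M) (f g : Module.Dual ℝ M) :
    (f⌋(g⌋(ιι a * (ιι b * (ιι c * ιι d))))) * (ιι a * (ιι b * (ιι c * ιι d))) = 0 := by
  simp only [CliffordAlgebra.contractLeft_ι_mul, CliffordAlgebra.contractLeft_ι,
    Algebra.algebraMap_eq_smul_one, map_sub, map_smul, mul_smul_comm, smul_mul_assoc,
    mul_one, one_mul, sub_mul, smul_sub, mul_sub, mul_assoc, stmt6_z1, stmt6_z2, stmt6_z3,
    stmt6_z4, mul_zero, smul_zero, sub_zero, zero_sub, neg_zero, smul_neg, sub_self, neg_neg]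

private theorem stmt6_ofFn (η : Fin 4 → M) :
    (List.ofFn fun i => ιι (η i)).prod = ιι (η 0) * (ιι (η 1) * (ιι (η 2) * ιι (η 3))) := by
  simp [List.ofFn_succ, mul_assoc]

private theorem stmt6_eq0 (b : Module.Basis (Fin 6) ℝ M) (ξ : M) (η : Fin 4 → M)
    (hη : ιι ξ * (ιι (b 0) * ιι (b 1) * ιι (b 2) + ιι (b 2) * ιι (b 3) * ιι (b 4)
        + ιι (b 4) * ιι (b 5) * ιι (b 0)) = (List.ofFn fun i => ιι (η i)).prod)
    (f g : Module.Dual ℝ M) :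
    ExteriorAlgebra.algebraMapInv
      ((b.coord 0)⌋((b.coord 1)⌋((b.coord 2)⌋((b.coord 3)⌋((b.coord 4)⌋((b.coord 5)⌋
        ((f⌋(g⌋(ιι ξ * (ιι (b 0) * ιι (b 1) * ιι (b 2) + ιι (b 2) * ιι (b 3) * ιι (b 4)
            + ιι (b 4) * ιι (b 5) * ιι (b 0))))) *
          (ιι ξ * (ιι (b 0) * ιι (b 1) * ιι (b 2) + ιι (b 2) * ιι (b 3) * ιι (b 4)
            + ιι (b 4) * ιι (b 5) * ιι (b 0)))))))))) = 0 := by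
  have hη' := hη.trans (stmt6_ofFn η)
  rw [hη', stmt6_key]
  simp

set_option maxHeartbeats 8000000 in
private theorem stmt6_coeff1 (b : Module.Basis (Fin 6) ℝ M) (ξ : M) (η : Fin 4 → M)
    (hη : ιι ξ * (ιι (b 0) * ιι (b 1) * ιι (b 2) + ιι (b 2) * ιι (b 3) * ιι (b 4)
        + ιι (b 4) * ιι (b 5) * ιι (b 0)) = (List.ofFn fun i => ιι (η i)).prod) :
    b.repr ξ 1 = 0 := by
  have E := stmt6_eq0 b ξ η hη (b.coord 1) (b.coord 4)
  simp [mul_assoc, CliffordAlgebra.contractLeft_ι_mul, CliffordAlgebra.contractLeft_ι,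
    Algebra.algebraMap_eq_smul_one, Module.Basis.coord_apply, Module.Basis.repr_self,
    Finsupp.single_apply, mul_smul_comm, smul_mul_assoc, sub_mul, smul_sub, mul_sub,
    add_mul, mul_add, smul_add, smul_smul] at E
  exact E

set_option maxHeartbeats 8000000 in
private theorem stmt6_coeff3 (b : Module.Basis (Fin 6) ℝ M) (ξ : M) (η : Fin 4 → M)
    (hη : ιι ξ * (ιι (b 0) * ιι (b 1) * ιι (b 2) + ιι (b 2) * ιι (b 3) * ιι (b 4)
        + ιι (b 4) * ιι (b 5) * ιι (b 0)) = (List.ofFn fun i => ιι (η i)).prod) :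
    b.repr ξ 3 = 0 := by
  have E := stmt6_eq0 b ξ η hη (b.coord 0) (b.coord 3)
  simp [mul_assoc, CliffordAlgebra.contractLeft_ι_mul, CliffordAlgebra.contractLeft_ι,
    Algebra.algebraMap_eq_smul_one, Module.Basis.coord_apply, Module.Basis.repr_self,
    Finsupp.single_apply, mul_smul_comm, smul_mul_assoc, sub_mul, smul_sub, mul_sub,
    add_mul, mul_add, smul_add, smul_smul] at E
  exact E

set_option maxHeartbeats 8000000 in
private theorem stmt6_coeff5 (b : Module.Basis (Fin 6) ℝ M) (ξ : M) (η : Fin 4 → M)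
    (hη : ιι ξ * (ιι (b 0) * ιι (b 1) * ιι (b 2) + ιι (b 2) * ιι (b 3) * ιι (b 4)
        + ιι (b 4) * ιι (b 5) * ιι (b 0)) = (List.ofFn fun i => ιι (η i)).prod) :
    b.repr ξ 5 = 0 := by
  have E := stmt6_eq0 b ξ η hη (b.coord 2) (b.coord 5)
  simp [mul_assoc, CliffordAlgebra.contractLeft_ι_mul, CliffordAlgebra.contractLeft_ι,
    Algebra.algebraMap_eq_smul_one, Module.Basis.coord_apply, Module.Basis.repr_self,
    Finsupp.single_apply, mul_smul_comm, smul_mul_assoc, sub_mul, smul_sub, mul_sub,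
    add_mul, mul_add, smul_add, smul_smul] at E
  exact E

set_option maxHeartbeats 8000000 in
private theorem stmt6_easy (b : Module.Basis (Fin 6) ℝ M) (x y z : ℝ) :
    ιι (x • b 0 + (y • b 2 + z • b 4)) *
        (ιι (b 0) * ιι (b 1) * ιι (b 2) + ιι (b 2) * ιι (b 3) * ιι (b 4)
          + ιι (b 4) * ιι (b 5) * ιι (b 0))
      = ιι (b 0) * (ιι (b 2) * (ιι (z • b 1 + x • b 3 + y • b 5) * ιι (b 4))) := by
  simp only [map_add, map_smul, add_mul, mul_add, smul_mul_assoc, mul_smul_comm,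
    mul_assoc, smul_add, smul_smul]
  simp only [stmt6_zz, stmt6_swap (b 1) (b 0), stmt6_swap (b 2) (b 0), stmt6_swap (b 2) (b 1),
    stmt6_swap (b 3) (b 0), stmt6_swap (b 3) (b 1), stmt6_swap (b 3) (b 2),
    stmt6_swap (b 4) (b 0), stmt6_swap (b 4) (b 1), stmt6_swap (b 4) (b 2),
    stmt6_swap (b 4) (b 3), stmt6_swap (b 5) (b 0), stmt6_swap (b 5) (b 1),
    stmt6_swap (b 5) (b 2), stmt6_swap (b 5) (b 3), stmt6_swap (b 5) (b 4),
    stmt6_swap3 (b 1) (b 0), stmt6_swap3 (b 2) (b 0), stmt6_swap3 (b 2) (b 1),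
    stmt6_swap3 (b 3) (b 0), stmt6_swap3 (b 3) (b 1), stmt6_swap3 (b 3) (b 2),
    stmt6_swap3 (b 4) (b 0), stmt6_swap3 (b 4) (b 1), stmt6_swap3 (b 4) (b 2),
    stmt6_swap3 (b 4) (b 3), stmt6_swap3 (b 5) (b 0), stmt6_swap3 (b 5) (b 1),
    stmt6_swap3 (b 5) (b 2), stmt6_swap3 (b 5) (b 3), stmt6_swap3 (b 5) (b 4),
    ExteriorAlgebra.ι_sq_zero, mul_neg, neg_mul, neg_neg, mul_zero, zero_mul,
    smul_neg, smul_zero, neg_zero, add_zero, zero_add]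

end Stmt6Aux

/-- In a six-dimensional real vector space `V` with basis `ξ¹, …, ξ⁶` of `V*`,
for `μ = ξ¹∧ξ²∧ξ³ + ξ³∧ξ⁴∧ξ⁵ + ξ⁵∧ξ⁶∧ξ¹`, the set of `ξ ∈ V*` with `ξ ∧ μ`
decomposable is exactly the span of `ξ¹, ξ³, ξ⁵`. (Indices are 0-based below.) -/
theorem stmt6 (V : Type*) [AddCommGroup V] [Module ℝ V] [FiniteDimensional ℝ V]
    (hdim : Module.finrank ℝ V = 6)
    (b : Module.Basis (Fin 6) ℝ (Module.Dual ℝ V)) :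
    {ξ : Module.Dual ℝ V |
      ∃ η : Fin 4 → Module.Dual ℝ V,
        ExteriorAlgebra.ι ℝ ξ *
            (ExteriorAlgebra.ι ℝ (b 0) * ExteriorAlgebra.ι ℝ (b 1) * ExteriorAlgebra.ι ℝ (b 2)
              + ExteriorAlgebra.ι ℝ (b 2) * ExteriorAlgebra.ι ℝ (b 3) * ExteriorAlgebra.ι ℝ (b 4)
              + ExteriorAlgebra.ι ℝ (b 4) * ExteriorAlgebra.ι ℝ (b 5) * ExteriorAlgebra.ι ℝ (b 0))
          = (List.ofFn fun i => ExteriorAlgebra.ι ℝ (η i)).prod}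
      = ↑(Submodule.span ℝ {b 0, b 2, b 4}) := by
  ext ξ
  simp only [Set.mem_setOf_eq, SetLike.mem_coe]
  constructor
  · rintro ⟨η, hη⟩
    have h1 := stmt6_coeff1 b ξ η hη
    have h3 := stmt6_coeff3 b ξ η hη
    have h5 := stmt6_coeff5 b ξ η hη
    have hs := b.sum_repr ξ
    rw [Fin.sum_univ_six, h1, h3, h5, zero_smul, zero_smul, zero_smul] at hs
    simp only [add_zero] at hs
    rw [← hs]
    refine Submodule.add_mem _ (Submodule.add_mem _ ?_ ?_) ?_ <;>
      exact Submodule.smul_mem _ _ (Submodule.subset_span (by simp))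
  · intro h
    rw [Submodule.mem_span_insert] at h
    obtain ⟨x, w, hw, rfl⟩ := h
    rw [Submodule.mem_span_insert] at hw
    obtain ⟨y, u, hu, rfl⟩ := hw
    rw [Submodule.mem_span_singleton] at hu
    obtain ⟨z, rfl⟩ := hu
    refine ⟨![b 0, b 2, z • b 1 + x • b 3 + y • b 5, b 4], ?_⟩
    rw [stmt6_ofFn]
    simp only [Matrix.cons_val_zero, Matrix.cons_val_one, Matrix.head_cons,
      Matrix.cons_val_two, Matrix.tail_cons, Matrix.cons_val_three]
    exact stmt6_easy b x y z
end

section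
/- Let V be a six-dimensional real vector space, let ξ¹, …, ξ⁶ be a basis of V*, and let μ = ξ¹ ∧ ξ² ∧ ξ³ + ξ⁴ ∧ ξ⁵ ∧ ξ⁶. Then the set of all ξ ∈ V* for which the 4-form ξ ∧ μ is decomposable (i.e., equals η¹ ∧ η² ∧ η³ ∧ η⁴ for some η¹, …, η⁴ ∈ V*) is exactly the set-theoretic union of the linear span of ξ¹, ξ², ξ³ and the linear span of ξ⁴, ξ⁵, ξ⁶. -/
set_option synthInstance.maxHeartbeats 1000000
set_option maxHeartbeats 1000000

open ExteriorAlgebra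

namespace Stmt7Aux

@[simp] lemma vec6_0 {α : Type*} (a0 a1 a2 a3 a4 a5 : α) : ![a0,a1,a2,a3,a4,a5] 0 = a0 := rfl
@[simp] lemma vec6_1 {α : Type*} (a0 a1 a2 a3 a4 a5 : α) : ![a0,a1,a2,a3,a4,a5] 1 = a1 := rfl
@[simp] lemma vec6_2 {α : Type*} (a0 a1 a2 a3 a4 a5 : α) : ![a0,a1,a2,a3,a4,a5] 2 = a2 := rfl
@[simp] lemma vec6_3 {α : Type*} (a0 a1 a2 a3 a4 a5 : α) : ![a0,a1,a2,a3,a4,a5] 3 = a3 := rfl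
@[simp] lemma vec6_4 {α : Type*} (a0 a1 a2 a3 a4 a5 : α) : ![a0,a1,a2,a3,a4,a5] 4 = a4 := rfl
@[simp] lemma vec6_5 {α : Type*} (a0 a1 a2 a3 a4 a5 : α) : ![a0,a1,a2,a3,a4,a5] 5 = a5 := rfl

variable {W : Type*} [AddCommGroup W] [Module ℝ W]

local notation f "⌋" x => CliffordAlgebra.contractLeft f x

lemma prod4_assoc (a b c d : W) :
    (List.ofFn fun i => ι ℝ (![a,b,c,d] i)).prod = ι ℝ a * (ι ℝ b * (ι ℝ c * ι ℝ d)) := by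
  simp [List.ofFn_succ, mul_assoc]

lemma prod4 (η : Fin 4 → W) :
    (List.ofFn fun i => ι ℝ (η i)).prod = ι ℝ (η 0) * (ι ℝ (η 1) * (ι ℝ (η 2) * ι ℝ (η 3))) := by
  simp [List.ofFn_succ, mul_assoc]

lemma ι_mul_prod4 (a b c d z : W) (hz : z ∈ ({a,b,c,d} : Set W)) :
    ι ℝ z * (ι ℝ a * (ι ℝ b * (ι ℝ c * ι ℝ d))) = 0 := by
  rw [← prod4_assoc]
  rcases hz with rfl | rfl | rfl | rfl
  · exact ι_mul_prod_list ![z,b,c,d] 0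
  · exact ι_mul_prod_list ![a,z,c,d] 1
  · exact ι_mul_prod_list ![a,b,z,d] 2
  · exact ι_mul_prod_list ![a,b,c,z] 3

lemma prod3_assoc (a b c : W) :
    (List.ofFn fun i => ι ℝ (![a,b,c] i)).prod = ι ℝ a * ι ℝ b * ι ℝ c := by
  simp [List.ofFn_succ, mul_assoc]

lemma span3 (a b c z : W) (hz : z ∈ Submodule.span ℝ ({a, b, c} : Set W)) :
    ι ℝ z * (ι ℝ a * ι ℝ b * ι ℝ c) = 0 := by
  rw [← prod3_assoc]
  induction hz using Submodule.span_induction with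
  | mem w hw =>
    rcases hw with rfl | rfl | rfl
    · exact ι_mul_prod_list ![w,b,c] 0
    · exact ι_mul_prod_list ![a,w,c] 1
    · exact ι_mul_prod_list ![a,b,w] 2
  | zero => simp
  | add u v _ _ hu hv => rw [map_add, add_mul, hu, hv, add_zero]
  | smul r u _ hu => rw [map_smul, smul_mul_assoc, hu, smul_zero]

lemma side (a b c d : W) (f1 f2 f3 : Module.Dual ℝ W) :
    (f3 ⌋ (f2 ⌋ (f1 ⌋ (ι ℝ a * (ι ℝ b * (ι ℝ c * ι ℝ d)))))) *
      (ι ℝ a * (ι ℝ b * (ι ℝ c * ι ℝ d))) = 0 := by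
  have ha := ι_mul_prod4 a b c d a (by simp)
  have hb := ι_mul_prod4 a b c d b (by simp)
  have hc := ι_mul_prod4 a b c d c (by simp)
  have hd := ι_mul_prod4 a b c d d (by simp)
  simp only [CliffordAlgebra.contractLeft_ι_mul, CliffordAlgebra.contractLeft_ι, map_sub,
    map_smul, mul_sub, sub_mul, smul_mul_assoc, mul_smul_comm, map_zero,
    CliffordAlgebra.contractLeft_algebraMap, Algebra.algebraMap_eq_smul_one, smul_mul_assoc,
    one_mul, mul_one, mul_zero, zero_mul, smul_zero, zero_sub, sub_zero, neg_mul, mul_neg,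
    mul_assoc, ha, hb, hc, hd, neg_zero, smul_neg, sub_self]

lemma can (x : Fin 6 → W) (δ : Fin 6 → Module.Dual ℝ W)
    (hδ : ∀ i j, δ i (x j) = if i = j then 1 else 0)
    (ξ : W) (η : Fin 4 → W)
    (hΩ : ι ℝ ξ * (ι ℝ (x 0) * ι ℝ (x 1) * ι ℝ (x 2) + ι ℝ (x 3) * ι ℝ (x 4) * ι ℝ (x 5))
        = ι ℝ (η 0) * (ι ℝ (η 1) * (ι ℝ (η 2) * ι ℝ (η 3)))) :
    δ 4 ξ * δ 1 ξ = 0 := by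
  set Ω := ι ℝ ξ * (ι ℝ (x 0) * ι ℝ (x 1) * ι ℝ (x 2) + ι ℝ (x 3) * ι ℝ (x 4) * ι ℝ (x 5))
    with hΩdef
  have h1 : (δ 4 ⌋ (δ 2 ⌋ (δ 1 ⌋ Ω))) = (δ 4) ξ • ι ℝ (x 0) := by
    rw [hΩdef]
    simp only [CliffordAlgebra.contractLeft_ι_mul, CliffordAlgebra.contractLeft_ι, map_add,
      map_sub, map_smul, mul_sub, sub_mul, add_mul, mul_add, smul_mul_assoc, mul_smul_comm,
      map_zero, map_neg, neg_smul, CliffordAlgebra.contractLeft_algebraMap,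
      Algebra.algebraMap_eq_smul_one,
      one_mul, mul_one, mul_zero, zero_mul, smul_zero, zero_sub, sub_zero, neg_mul, mul_neg,
      mul_assoc, hδ, Fin.isValue, Fin.reduceEq, reduceIte, zero_smul, one_smul, smul_smul,
      smul_add, smul_sub, add_zero, zero_add, neg_zero, sub_self, smul_neg, neg_neg]
  have key : (δ 5 ⌋ (δ 4 ⌋ (δ 3 ⌋ (δ 1 ⌋ (δ 0 ⌋ (((δ 4) ξ • ι ℝ (x 0)) * Ω)))))) = 0 := by
    rw [← h1, hΩ, side]
    simp
  rw [hΩdef] at key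
  simp only [CliffordAlgebra.contractLeft_ι_mul, CliffordAlgebra.contractLeft_ι, map_add,
    map_sub, map_smul, mul_sub, sub_mul, add_mul, mul_add, smul_mul_assoc, mul_smul_comm,
    map_zero, map_neg, neg_smul, CliffordAlgebra.contractLeft_algebraMap,
    Algebra.algebraMap_eq_smul_one,
    one_mul, mul_one, mul_zero, zero_mul, smul_zero, zero_sub, sub_zero, neg_mul, mul_neg,
    mul_assoc, hδ, Fin.isValue, Fin.reduceEq, reduceIte, zero_smul, one_smul, smul_smul,
    smul_add, smul_sub, add_zero, zero_add, neg_zero, sub_self, smul_neg, neg_neg] at key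
  rwa [← Algebra.algebraMap_eq_smul_one, ExteriorAlgebra.algebraMap_eq_zero_iff] at key

lemma tri_swap1 (u v w : W) : ι ℝ v * ι ℝ u * ι ℝ (-w) = ι ℝ u * ι ℝ v * ι ℝ w := by
  have h : ι ℝ v * ι ℝ u = -(ι ℝ u * ι ℝ v) :=
    eq_neg_of_add_eq_zero_left (ι_add_mul_swap v u)
  rw [map_neg, mul_neg, h, neg_mul, neg_neg]

lemma tri_swap2 (u v w : W) : ι ℝ u * ι ℝ w * ι ℝ (-v) = ι ℝ u * ι ℝ v * ι ℝ w := by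
  have h : ι ℝ w * ι ℝ v = -(ι ℝ v * ι ℝ w) :=
    eq_neg_of_add_eq_zero_left (ι_add_mul_swap w v)
  rw [map_neg, mul_neg, mul_assoc, h, mul_neg, neg_neg, ← mul_assoc]

lemma rel03 (x : Fin 6 → W) (δ : Fin 6 → Module.Dual ℝ W)
    (hδ : ∀ i j, δ i (x j) = if i = j then 1 else 0)
    (ξ : W) (η : Fin 4 → W)
    (hΩ : ι ℝ ξ * (ι ℝ (x 0) * ι ℝ (x 1) * ι ℝ (x 2) + ι ℝ (x 3) * ι ℝ (x 4) * ι ℝ (x 5))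
        = ι ℝ (η 0) * (ι ℝ (η 1) * (ι ℝ (η 2) * ι ℝ (η 3)))) :
    δ 3 ξ * δ 0 ξ = 0 := by
  have h := can ![x 1, x 0, -(x 2), x 4, x 3, -(x 5)] ![δ 1, δ 0, -(δ 2), δ 4, δ 3, -(δ 5)]
      (by intro i j; fin_cases i <;> fin_cases j <;> simp [hδ, LinearMap.neg_apply, map_neg])
      ξ η (by
        show ι ℝ ξ * (ι ℝ (x 1) * ι ℝ (x 0) * ι ℝ (-(x 2)) + ι ℝ (x 4) * ι ℝ (x 3) * ι ℝ (-(x 5))) = _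
        rw [tri_swap1, tri_swap1]; exact hΩ)
  simpa [LinearMap.neg_apply] using h

lemma rel04 (x : Fin 6 → W) (δ : Fin 6 → Module.Dual ℝ W)
    (hδ : ∀ i j, δ i (x j) = if i = j then 1 else 0)
    (ξ : W) (η : Fin 4 → W)
    (hΩ : ι ℝ ξ * (ι ℝ (x 0) * ι ℝ (x 1) * ι ℝ (x 2) + ι ℝ (x 3) * ι ℝ (x 4) * ι ℝ (x 5))
        = ι ℝ (η 0) * (ι ℝ (η 1) * (ι ℝ (η 2) * ι ℝ (η 3)))) :
    δ 4 ξ * δ 0 ξ = 0 := by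
  have h := can ![x 1, x 0, -(x 2), x 3, x 4, x 5] ![δ 1, δ 0, -(δ 2), δ 3, δ 4, δ 5]
      (by intro i j; fin_cases i <;> fin_cases j <;> simp [hδ, LinearMap.neg_apply, map_neg])
      ξ η (by
        show ι ℝ ξ * (ι ℝ (x 1) * ι ℝ (x 0) * ι ℝ (-(x 2)) + ι ℝ (x 3) * ι ℝ (x 4) * ι ℝ (x 5)) = _
        rw [tri_swap1]; exact hΩ)
  simpa [LinearMap.neg_apply] using h

lemma rel05 (x : Fin 6 → W) (δ : Fin 6 → Module.Dual ℝ W)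
    (hδ : ∀ i j, δ i (x j) = if i = j then 1 else 0)
    (ξ : W) (η : Fin 4 → W)
    (hΩ : ι ℝ ξ * (ι ℝ (x 0) * ι ℝ (x 1) * ι ℝ (x 2) + ι ℝ (x 3) * ι ℝ (x 4) * ι ℝ (x 5))
        = ι ℝ (η 0) * (ι ℝ (η 1) * (ι ℝ (η 2) * ι ℝ (η 3)))) :
    δ 5 ξ * δ 0 ξ = 0 := by
  have h := can ![x 1, x 0, -(x 2), x 3, x 5, -(x 4)] ![δ 1, δ 0, -(δ 2), δ 3, δ 5, -(δ 4)]
      (by intro i j; fin_cases i <;> fin_cases j <;> simp [hδ, LinearMap.neg_apply, map_neg])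
      ξ η (by
        show ι ℝ ξ * (ι ℝ (x 1) * ι ℝ (x 0) * ι ℝ (-(x 2)) + ι ℝ (x 3) * ι ℝ (x 5) * ι ℝ (-(x 4))) = _
        rw [tri_swap1, tri_swap2]; exact hΩ)
  simpa [LinearMap.neg_apply] using h

lemma rel13 (x : Fin 6 → W) (δ : Fin 6 → Module.Dual ℝ W)
    (hδ : ∀ i j, δ i (x j) = if i = j then 1 else 0)
    (ξ : W) (η : Fin 4 → W)
    (hΩ : ι ℝ ξ * (ι ℝ (x 0) * ι ℝ (x 1) * ι ℝ (x 2) + ι ℝ (x 3) * ι ℝ (x 4) * ι ℝ (x 5))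
        = ι ℝ (η 0) * (ι ℝ (η 1) * (ι ℝ (η 2) * ι ℝ (η 3)))) :
    δ 3 ξ * δ 1 ξ = 0 := by
  have h := can ![x 0, x 1, x 2, x 4, x 3, -(x 5)] ![δ 0, δ 1, δ 2, δ 4, δ 3, -(δ 5)]
      (by intro i j; fin_cases i <;> fin_cases j <;> simp [hδ, LinearMap.neg_apply, map_neg])
      ξ η (by
        show ι ℝ ξ * (ι ℝ (x 0) * ι ℝ (x 1) * ι ℝ (x 2) + ι ℝ (x 4) * ι ℝ (x 3) * ι ℝ (-(x 5))) = _
        rw [tri_swap1]; exact hΩ)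
  simpa [LinearMap.neg_apply] using h

lemma rel15 (x : Fin 6 → W) (δ : Fin 6 → Module.Dual ℝ W)
    (hδ : ∀ i j, δ i (x j) = if i = j then 1 else 0)
    (ξ : W) (η : Fin 4 → W)
    (hΩ : ι ℝ ξ * (ι ℝ (x 0) * ι ℝ (x 1) * ι ℝ (x 2) + ι ℝ (x 3) * ι ℝ (x 4) * ι ℝ (x 5))
        = ι ℝ (η 0) * (ι ℝ (η 1) * (ι ℝ (η 2) * ι ℝ (η 3)))) :
    δ 5 ξ * δ 1 ξ = 0 := by
  have h := can ![x 0, x 1, x 2, x 3, x 5, -(x 4)] ![δ 0, δ 1, δ 2, δ 3, δ 5, -(δ 4)]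
      (by intro i j; fin_cases i <;> fin_cases j <;> simp [hδ, LinearMap.neg_apply, map_neg])
      ξ η (by
        show ι ℝ ξ * (ι ℝ (x 0) * ι ℝ (x 1) * ι ℝ (x 2) + ι ℝ (x 3) * ι ℝ (x 5) * ι ℝ (-(x 4))) = _
        rw [tri_swap2]; exact hΩ)
  simpa [LinearMap.neg_apply] using h

lemma rel23 (x : Fin 6 → W) (δ : Fin 6 → Module.Dual ℝ W)
    (hδ : ∀ i j, δ i (x j) = if i = j then 1 else 0)
    (ξ : W) (η : Fin 4 → W)
    (hΩ : ι ℝ ξ * (ι ℝ (x 0) * ι ℝ (x 1) * ι ℝ (x 2) + ι ℝ (x 3) * ι ℝ (x 4) * ι ℝ (x 5))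
        = ι ℝ (η 0) * (ι ℝ (η 1) * (ι ℝ (η 2) * ι ℝ (η 3)))) :
    δ 3 ξ * δ 2 ξ = 0 := by
  have h := can ![x 0, x 2, -(x 1), x 4, x 3, -(x 5)] ![δ 0, δ 2, -(δ 1), δ 4, δ 3, -(δ 5)]
      (by intro i j; fin_cases i <;> fin_cases j <;> simp [hδ, LinearMap.neg_apply, map_neg])
      ξ η (by
        show ι ℝ ξ * (ι ℝ (x 0) * ι ℝ (x 2) * ι ℝ (-(x 1)) + ι ℝ (x 4) * ι ℝ (x 3) * ι ℝ (-(x 5))) = _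
        rw [tri_swap2, tri_swap1]; exact hΩ)
  simpa [LinearMap.neg_apply] using h

lemma rel24 (x : Fin 6 → W) (δ : Fin 6 → Module.Dual ℝ W)
    (hδ : ∀ i j, δ i (x j) = if i = j then 1 else 0)
    (ξ : W) (η : Fin 4 → W)
    (hΩ : ι ℝ ξ * (ι ℝ (x 0) * ι ℝ (x 1) * ι ℝ (x 2) + ι ℝ (x 3) * ι ℝ (x 4) * ι ℝ (x 5))
        = ι ℝ (η 0) * (ι ℝ (η 1) * (ι ℝ (η 2) * ι ℝ (η 3)))) :
    δ 4 ξ * δ 2 ξ = 0 := by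
  have h := can ![x 0, x 2, -(x 1), x 3, x 4, x 5] ![δ 0, δ 2, -(δ 1), δ 3, δ 4, δ 5]
      (by intro i j; fin_cases i <;> fin_cases j <;> simp [hδ, LinearMap.neg_apply, map_neg])
      ξ η (by
        show ι ℝ ξ * (ι ℝ (x 0) * ι ℝ (x 2) * ι ℝ (-(x 1)) + ι ℝ (x 3) * ι ℝ (x 4) * ι ℝ (x 5)) = _
        rw [tri_swap2]; exact hΩ)
  simpa [LinearMap.neg_apply] using h

lemma rel25 (x : Fin 6 → W) (δ : Fin 6 → Module.Dual ℝ W)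
    (hδ : ∀ i j, δ i (x j) = if i = j then 1 else 0)
    (ξ : W) (η : Fin 4 → W)
    (hΩ : ι ℝ ξ * (ι ℝ (x 0) * ι ℝ (x 1) * ι ℝ (x 2) + ι ℝ (x 3) * ι ℝ (x 4) * ι ℝ (x 5))
        = ι ℝ (η 0) * (ι ℝ (η 1) * (ι ℝ (η 2) * ι ℝ (η 3)))) :
    δ 5 ξ * δ 2 ξ = 0 := by
  have h := can ![x 0, x 2, -(x 1), x 3, x 5, -(x 4)] ![δ 0, δ 2, -(δ 1), δ 3, δ 5, -(δ 4)]
      (by intro i j; fin_cases i <;> fin_cases j <;> simp [hδ, LinearMap.neg_apply, map_neg])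
      ξ η (by
        show ι ℝ ξ * (ι ℝ (x 0) * ι ℝ (x 2) * ι ℝ (-(x 1)) + ι ℝ (x 3) * ι ℝ (x 5) * ι ℝ (-(x 4))) = _
        rw [tri_swap2, tri_swap2]; exact hΩ)
  simpa [LinearMap.neg_apply] using h

end Stmt7Aux

/-- In a six-dimensional real vector space `V` with basis `ξ¹, …, ξ⁶` of `V*`,
for `μ = ξ¹∧ξ²∧ξ³ + ξ⁴∧ξ⁵∧ξ⁶`, the set of `ξ ∈ V*` with `ξ ∧ μ` decomposable is the
union of the span of `ξ¹, ξ², ξ³` and the span of `ξ⁴, ξ⁵, ξ⁶`. (0-based indices.) -/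
theorem stmt7 (V : Type*) [AddCommGroup V] [Module ℝ V] [FiniteDimensional ℝ V]
    (hdim : Module.finrank ℝ V = 6)
    (b : Module.Basis (Fin 6) ℝ (Module.Dual ℝ V)) :
    {ξ : Module.Dual ℝ V |
      ∃ η : Fin 4 → Module.Dual ℝ V,
        ExteriorAlgebra.ι ℝ ξ *
            (ExteriorAlgebra.ι ℝ (b 0) * ExteriorAlgebra.ι ℝ (b 1) * ExteriorAlgebra.ι ℝ (b 2)
              + ExteriorAlgebra.ι ℝ (b 3) * ExteriorAlgebra.ι ℝ (b 4) * ExteriorAlgebra.ι ℝ (b 5))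
          = (List.ofFn fun i => ExteriorAlgebra.ι ℝ (η i)).prod}
      = ↑(Submodule.span ℝ {b 0, b 1, b 2}) ∪ ↑(Submodule.span ℝ {b 3, b 4, b 5}) := by
  classical
  ext ξ
  simp only [Set.mem_setOf_eq, Set.mem_union, SetLike.mem_coe]
  constructor
  · rintro ⟨η, hη⟩
    rw [Stmt7Aux.prod4] at hη
    have hbc : ∀ i j : Fin 6, b.coord i (b j) = if i = j then 1 else 0 := by
      intro i j
      rcases eq_or_ne i j with rfl | h
      · simp
      · simp [Module.Basis.coord_apply, Finsupp.single_apply, Ne.symm h, h]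
    have rel : ∀ i j : Fin 6, i ∈ ({0,1,2} : Set (Fin 6)) → j ∈ ({3,4,5} : Set (Fin 6)) →
        b.repr ξ j * b.repr ξ i = 0 := by
      have hbc' : ∀ i j : Fin 6, (fun k => b.coord k) i ((fun k => b k) j)
          = if i = j then 1 else 0 := hbc
      intro i j hi hj
      rcases hi with rfl | rfl | rfl <;> rcases hj with rfl | rfl | rfl
      · simpa [Module.Basis.coord_apply] using
          Stmt7Aux.rel03 (fun k => b k) (fun k => b.coord k) hbc' ξ η hη
      · simpa [Module.Basis.coord_apply] using
          Stmt7Aux.rel04 (fun k => b k) (fun k => b.coord k) hbc' ξ η hη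
      · simpa [Module.Basis.coord_apply] using
          Stmt7Aux.rel05 (fun k => b k) (fun k => b.coord k) hbc' ξ η hη
      · simpa [Module.Basis.coord_apply] using
          Stmt7Aux.rel13 (fun k => b k) (fun k => b.coord k) hbc' ξ η hη
      · simpa [Module.Basis.coord_apply] using
          Stmt7Aux.can (fun k => b k) (fun k => b.coord k) hbc' ξ η hη
      · simpa [Module.Basis.coord_apply] using
          Stmt7Aux.rel15 (fun k => b k) (fun k => b.coord k) hbc' ξ η hη
      · simpa [Module.Basis.coord_apply] using
          Stmt7Aux.rel23 (fun k => b k) (fun k => b.coord k) hbc' ξ η hη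
      · simpa [Module.Basis.coord_apply] using
          Stmt7Aux.rel24 (fun k => b k) (fun k => b.coord k) hbc' ξ η hη
      · simpa [Module.Basis.coord_apply] using
          Stmt7Aux.rel25 (fun k => b k) (fun k => b.coord k) hbc' ξ η hη
    have hξ : ξ = b.repr ξ 0 • b 0 + b.repr ξ 1 • b 1 + b.repr ξ 2 • b 2
        + b.repr ξ 3 • b 3 + b.repr ξ 4 • b 4 + b.repr ξ 5 • b 5 := by
      have h := b.sum_repr ξ
      rw [Fin.sum_univ_six] at h
      exact h.symm
    by_cases h012 : b.repr ξ 0 = 0 ∧ b.repr ξ 1 = 0 ∧ b.repr ξ 2 = 0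
    · right
      obtain ⟨h0, h1, h2⟩ := h012
      rw [hξ, h0, h1, h2]
      simp only [zero_smul, zero_add]
      refine add_mem (add_mem ?_ ?_) ?_ <;>
        exact Submodule.smul_mem _ _ (Submodule.subset_span (by simp))
    · left
      have key : ∀ j : Fin 6, j ∈ ({3,4,5} : Set (Fin 6)) → b.repr ξ j = 0 := by
        intro j hj
        rcases not_and_or.mp h012 with h | h'
        · rcases mul_eq_zero.mp (rel 0 j (by simp) hj) with h' | h'
          · exact h'
          · exact absurd h' h
        rcases not_and_or.mp h' with h | h
        · rcases mul_eq_zero.mp (rel 1 j (by simp) hj) with h' | h'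
          · exact h'
          · exact absurd h' h
        · rcases mul_eq_zero.mp (rel 2 j (by simp) hj) with h' | h'
          · exact h'
          · exact absurd h' h
      have h3 := key 3 (by simp)
      have h4 := key 4 (by simp)
      have h5 := key 5 (by simp)
      rw [hξ, h3, h4, h5]
      simp only [zero_smul, add_zero, zero_add]
      refine add_mem (add_mem ?_ ?_) ?_ <;>
        exact Submodule.smul_mem _ _ (Submodule.subset_span (by simp))
  · rintro (hξ | hξ)
    · refine ⟨![ξ, b 3, b 4, b 5], ?_⟩
      rw [Stmt7Aux.prod4]
      rw [mul_add, Stmt7Aux.span3 _ _ _ _ hξ, zero_add]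
      simp [mul_assoc]
    · refine ⟨![ξ, b 0, b 1, b 2], ?_⟩
      rw [Stmt7Aux.prod4]
      rw [mul_add, Stmt7Aux.span3 _ _ _ _ hξ, add_zero]
      simp [mul_assoc]
end

section
/- Let V be a real vector space of even dimension n = 2m with m ≥ 1, let ξ¹, …, ξⁿ be a basis of V*, and set σ_j = ξ^{2j−1} ∧ ξ^{2j} for j = 1, …, m. Then the exterior (n−2)-form μ = Σ_{i=1}^{m} σ₁ ∧ … ∧ σ_{i−1} ∧ σ_{i+1} ∧ … ∧ σ_m (the i-th factor omitted in each summand) is indivisible: ξ ∧ μ ≠ 0 for every nonzero ξ ∈ V*. (This says that the (n−2)-form dual to a nondegenerate exterior 2-form is indivisible.) -/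
set_option synthInstance.maxHeartbeats 1000000
set_option maxHeartbeats 1000000
set_option maxRecDepth 4000

namespace Stmt8Aux

open ExteriorAlgebra

variable {R M : Type*} [CommRing R] [AddCommGroup M] [Module R M]

lemma aux_prod_if {m : ℕ} (e e' : Fin m → M) (i : Fin m) (s : List (Fin m)) :
    (s.map (fun j => if j = i then (1 : ExteriorAlgebra R M)
      else ExteriorAlgebra.ι R (e j) * ExteriorAlgebra.ι R (e' j))).prod
    = (((s.filter (fun j => j ≠ i)).flatMap (fun j => [e j, e' j])).map
        (ExteriorAlgebra.ι R)).prod := by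
  induction s with
  | nil => simp
  | cons a t ih =>
    by_cases h : a = i
    · simp [List.filter_cons, h, ih]
    · simp [List.filter_cons, h, ih, mul_assoc]

lemma aux_map_prod (L : List M) :
    (L.map (ExteriorAlgebra.ι R)).prod = ExteriorAlgebra.ιMulti R L.length L.get := by
  rw [ιMulti_apply]
  conv_lhs => rw [← List.ofFn_get L]
  rw [List.map_ofFn]
  rfl

lemma countP_finRange {m : ℕ} (i : Fin m) :
    (List.finRange m).countP (fun j => j = i) = 1 := by
  have h := List.count_eq_one_of_mem (List.nodup_finRange m) (List.mem_finRange i)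
  rw [List.count_eq_countP] at h
  rw [← h]
  apply List.countP_congr; intro a _; simp

lemma length_filter_finRange {m : ℕ} (i : Fin m) :
    ((List.finRange m).filter (fun j => j ≠ i)).length = m - 1 := by
  have h2 := List.length_eq_countP_add_countP (fun j => j = i) (l := List.finRange m)
  have h3 := countP_finRange i
  rw [← List.countP_eq_length_filter]
  have h4 : (List.finRange m).length = m := List.length_finRange
  have h5 : (List.finRange m).countP (fun j => (j ≠ i : Prop))
      = (List.finRange m).countP (fun a => ¬ decide (a = i) = true) := by
    apply List.countP_congr; intro a _; simp
  omega

/-- The list of the basis vectors `e j, e' j` for `j ≠ i`. -/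
def LAux {m : ℕ} (e e' : Fin m → M) (i : Fin m) : List M :=
  ((List.finRange m).filter (fun j => j ≠ i)).flatMap (fun j => [e j, e' j])

lemma length_LAux {m : ℕ} (e e' : Fin m → M) (i : Fin m) :
    (LAux e e' i).length = 2 * m - 2 := by
  rw [LAux, List.length_flatMap]
  have h1 := length_filter_finRange i
  have : (List.map (List.length ∘ fun j : Fin m => [e j, e' j])
      ((List.finRange m).filter (fun j => j ≠ i))).sum = 2 * (m-1) := by
    rw [show (List.length ∘ fun j : Fin m => [e j, e' j]) = fun _ => 2 from rfl]
    rw [List.map_const', List.sum_replicate, h1, smul_eq_mul, Nat.mul_comm]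
  have h2 : 2 * (m - 1) = 2 * m - 2 := by omega
  exact this.trans h2

lemma mem_LAux {m : ℕ} {n : ℕ} [Nontrivial R] (b : Module.Basis (Fin n) R M) (hn : n = 2 * m)
    (e e' : Fin m → M) (he : ∀ j, e j = b (Fin.cast hn.symm ⟨2*(j:ℕ), by omega⟩))
    (he' : ∀ j, e' j = b (Fin.cast hn.symm ⟨2*(j:ℕ)+1, by omega⟩))
    (i : Fin m) (r : Fin n) :
    b r ∈ LAux e e' i ↔ (r : ℕ)/2 ≠ (i : ℕ) := by
  subst hn
  rw [LAux, List.mem_flatMap]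
  constructor
  · rintro ⟨j, hj, hmem⟩
    rw [List.mem_filter] at hj
    have hji : j ≠ i := by simpa using hj.2
    simp only [List.mem_cons, List.mem_singleton, List.not_mem_nil, or_false] at hmem
    have : (r : ℕ) = 2*(j:ℕ) ∨ (r : ℕ) = 2*(j:ℕ)+1 := by
      rcases hmem with h | h
      · left
        have h2 : b r = b (Fin.cast rfl ⟨2*(j:ℕ), by omega⟩) := by rw [h, he]
        exact congrArg Fin.val (b.injective h2)
      · right
        have h2 : b r = b (Fin.cast rfl ⟨2*(j:ℕ)+1, by omega⟩) := by rw [h, he']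
        exact congrArg Fin.val (b.injective h2)
    have hji' : (j:ℕ) ≠ (i:ℕ) := fun hc => hji (Fin.ext hc)
    omega
  · intro hr
    have hlt : (r:ℕ)/2 < m := by omega
    refine ⟨⟨(r:ℕ)/2, hlt⟩, ?_, ?_⟩
    · rw [List.mem_filter]
      refine ⟨List.mem_finRange _, ?_⟩
      simp only [decide_eq_true_eq]
      intro hc
      exact hr (congrArg Fin.val hc)
    · have h : (r:ℕ) = 2*((r:ℕ)/2) ∨ (r:ℕ) = 2*((r:ℕ)/2)+1 := by omega
      simp only [List.mem_cons, List.mem_singleton, List.not_mem_nil, or_false]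
      rcases h with h | h
      · left; rw [he]; exact congrArg b (Fin.ext h)
      · right; rw [he']; exact congrArg b (Fin.ext h)

/-- Every element of `LAux` is a basis vector. -/
lemma LAux_mem_range {m n : ℕ} (b : Module.Basis (Fin n) R M) (hn : n = 2 * m)
    (e e' : Fin m → M) (he : ∀ j, e j = b (Fin.cast hn.symm ⟨2*(j:ℕ), by omega⟩))
    (he' : ∀ j, e' j = b (Fin.cast hn.symm ⟨2*(j:ℕ)+1, by omega⟩))
    (i : Fin m) (x : M) (hx : x ∈ LAux e e' i) : ∃ r : Fin n, b r = x := by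
  rw [LAux, List.mem_flatMap] at hx
  obtain ⟨j, _, hmem⟩ := hx
  simp only [List.mem_cons, List.mem_singleton, List.not_mem_nil, or_false] at hmem
  rcases hmem with h | h
  · exact ⟨_, (he j ▸ h.symm : _)⟩
  · exact ⟨_, (he' j ▸ h.symm : _)⟩

/-- The detecting family of alternating maps built from `b.det`. -/
noncomputable def gAux {n : ℕ} (b : Module.Basis (Fin n) R M) :
    ∀ i, M [⋀^Fin i]→ₗ[R] R :=
  fun i => if h : i = n then (b.det).domDomCongr (finCongr h).symm else 0

lemma FAux_prod {n : ℕ} (b : Module.Basis (Fin n) R M) (L : List M) (h : L.length = n) :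
    liftAlternating (gAux b) ((L.map (ExteriorAlgebra.ι R)).prod)
      = b.det (fun t : Fin n => L.get (Fin.cast h.symm t)) := by
  rw [aux_map_prod, liftAlternating_apply_ιMulti]
  rw [gAux, dif_pos h]
  rfl

end Stmt8Aux

namespace Stmt8Aux

variable {R M : Type*} [CommRing R] [AddCommGroup M] [Module R M]

lemma get_cons_cons_zero {α : Type*} (x y : α) (L : List α) (h : 0 < (x::y::L).length) :
    (x::y::L).get ⟨0, h⟩ = x := rfl

lemma get_cons_cons_one {α : Type*} (x y : α) (L : List α) (h : 1 < (x::y::L).length) :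
    (x::y::L).get ⟨1, h⟩ = y := rfl

lemma get_pos_of_mem {α : Type*} {x y z : α} {L : List α} (hz : z ∈ L) :
    ∃ q : Fin (x::y::L).length, 2 ≤ (q:ℕ) ∧ (x::y::L).get q = z := by
  obtain ⟨p, hp⟩ := List.mem_iff_get.mp hz
  refine ⟨⟨(p:ℕ)+2, by simp only [List.length_cons]; omega⟩, by simp, ?_⟩
  simpa using hp

lemma det_get_eq_zero {n : ℕ} (b : Module.Basis (Fin n) R M) (L : List M) (h : L.length = n)
    (p q : Fin L.length) (hpq : p ≠ q) (hv : L.get p = L.get q) :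
    b.det (fun t : Fin n => L.get (Fin.cast h.symm t)) = 0 := by
  apply AlternatingMap.map_eq_zero_of_eq _ _ (i := Fin.cast h p) (j := Fin.cast h q)
  · show L.get (Fin.cast h.symm (Fin.cast h p)) = L.get (Fin.cast h.symm (Fin.cast h q))
    have e1 : Fin.cast h.symm (Fin.cast h p) = p := by apply Fin.ext; rfl
    have e2 : Fin.cast h.symm (Fin.cast h q) = q := by apply Fin.ext; rfl
    rw [e1, e2]; exact hv
  · intro hc
    have hcv := congrArg Fin.val hc
    exact hpq (Fin.ext hcv)

lemma det_ne_zero_of_perm {n : ℕ} [Nontrivial R] (b : Module.Basis (Fin n) R M) (L : List M)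
    (h : L.length = n) (h1 : ∀ x ∈ L, ∃ r, b r = x) (h2 : ∀ r : Fin n, b r ∈ L) :
    b.det (fun t : Fin n => L.get (Fin.cast h.symm t)) ≠ 0 := by
  set fam := fun t : Fin n => L.get (Fin.cast h.symm t) with hfamdef
  have hmem : ∀ t, fam t ∈ L := fun t => List.get_mem L _
  choose u hu using fun t => h1 (fam t) (hmem t)
  have hsurj : Function.Surjective u := by
    intro r
    obtain ⟨p, hp⟩ := List.mem_iff_get.mp (h2 r)
    refine ⟨Fin.cast h p, ?_⟩
    apply b.injective
    rw [hu]
    have e1 : Fin.cast h.symm (Fin.cast h p) = p := by apply Fin.ext; rfl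
    show L.get (Fin.cast h.symm (Fin.cast h p)) = b r
    rw [e1]; exact hp
  have hinj : Function.Injective u := Finite.injective_iff_surjective.mpr hsurj
  have hfam : fam = b ∘ u := funext fun t => (hu t).symm
  have hli : LinearIndependent R fam := by
    rw [hfam]; exact b.linearIndependent.comp u hinj
  have hsp : Submodule.span R (Set.range fam) = ⊤ := by
    rw [hfam, Set.range_comp, hsurj.range_eq, Set.image_univ, b.span_eq]
  exact ((Module.Basis.is_basis_iff_det b).mp ⟨hli, hsp⟩).ne_zero

end Stmt8Aux
open Stmt8Aux ExteriorAlgebra in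
/-- In a real vector space `V` of even dimension `n = 2m` (`m ≥ 1`) with a
basis `ξ¹, …, ξⁿ` of `V*`, setting `σ_j = ξ^{2j-1} ∧ ξ^{2j}`, the `(n-2)`-form
`μ = Σ_i σ₁ ∧ ⋯ ∧ σ̂_i ∧ ⋯ ∧ σ_m` (the hat marking the omitted factor, realized below by
replacing it with `1`) is indivisible: `ξ ∧ μ ≠ 0` for every nonzero `ξ ∈ V*`.
(0-based indices: `σ_j = ξ^{2j} ∧ ξ^{2j+1}`.) -/
theorem stmt8 (V : Type*) [AddCommGroup V] [Module ℝ V] [FiniteDimensional ℝ V]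
    (m : ℕ) (hm : 1 ≤ m) (hdim : Module.finrank ℝ V = 2 * m)
    (b : Module.Basis (Fin (2 * m)) ℝ (Module.Dual ℝ V)) :
    ∀ ξ : Module.Dual ℝ V, ξ ≠ 0 →
      ExteriorAlgebra.ι ℝ ξ *
        (∑ i : Fin m,
          (List.ofFn fun j : Fin m =>
            if j = i then 1
            else ExteriorAlgebra.ι ℝ (b ⟨2 * (j : ℕ), by have := j.isLt; omega⟩) *
                 ExteriorAlgebra.ι ℝ (b ⟨2 * (j : ℕ) + 1, by have := j.isLt; omega⟩)).prod)
        ≠ 0 := by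
  intro ξ hξ h0
  classical
  -- pick a nonzero coordinate of ξ
  obtain ⟨k, hk⟩ : ∃ k, b.repr ξ k ≠ 0 := by
    by_contra hc
    push_neg at hc
    exact hξ (by
      have : b.repr ξ = 0 := Finsupp.ext fun k => hc k
      simpa using b.repr.injective (by simpa using this))
  have hk2 : (k : ℕ) < 2 * m := k.isLt
  set e : Fin m → Module.Dual ℝ V :=
    (fun j => b (Fin.cast rfl ⟨2*(j:ℕ), by have := j.isLt; omega⟩)) with he_def
  set e' : Fin m → Module.Dual ℝ V :=
    (fun j => b (Fin.cast rfl ⟨2*(j:ℕ)+1, by have := j.isLt; omega⟩)) with he'_def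
  have he : ∀ j, e j = b (Fin.cast rfl ⟨2*(j:ℕ), by have := j.isLt; omega⟩) := fun j => rfl
  have he' : ∀ j, e' j = b (Fin.cast rfl ⟨2*(j:ℕ)+1, by have := j.isLt; omega⟩) := fun j => rfl
  set i0 : Fin m := ⟨(k:ℕ)/2, by omega⟩ with hi0
  set k' : Fin (2*m) := ⟨2*((k:ℕ)/2) + 1 - (k:ℕ) % 2, by omega⟩ with hk'
  have hkk'v : (k:ℕ) ≠ (k':ℕ) := by
    simp only [hk']
    omega
  -- the lists
  have hlen : ∀ (l : Fin (2*m)) (i : Fin m),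
      (b k' :: b l :: LAux e e' i).length = 2*m := by
    intro l i
    simp only [List.length_cons, length_LAux]
    omega
  -- rewrite μ
  have hμ : (∑ i : Fin m,
          (List.ofFn fun j : Fin m =>
            if j = i then 1
            else ExteriorAlgebra.ι ℝ (b ⟨2 * (j : ℕ), by have := j.isLt; omega⟩) *
                 ExteriorAlgebra.ι ℝ (b ⟨2 * (j : ℕ) + 1, by have := j.isLt; omega⟩)).prod)
      = ∑ i : Fin m, ((LAux e e' i).map (ExteriorAlgebra.ι ℝ)).prod := by
    refine Finset.sum_congr rfl fun i _ => ?_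
    rw [List.ofFn_eq_map]
    exact aux_prod_if e e' i (List.finRange m)
  -- expand ι ξ
  have hξexp : ExteriorAlgebra.ι ℝ ξ
      = ∑ l, b.repr ξ l • ExteriorAlgebra.ι ℝ (b l) := by
    conv_lhs => rw [← b.sum_repr ξ]
    rw [map_sum]
    simp [map_smul]
  -- main expansion
  have hexp : ExteriorAlgebra.ι ℝ (b k') * (ExteriorAlgebra.ι ℝ ξ *
        (∑ i : Fin m, ((LAux e e' i).map (ExteriorAlgebra.ι ℝ)).prod))
      = ∑ l, ∑ i : Fin m, b.repr ξ l •
          (((b k' :: b l :: LAux e e' i).map (ExteriorAlgebra.ι ℝ)).prod) := by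
    rw [hξexp, Finset.sum_mul, Finset.mul_sum]
    refine Finset.sum_congr rfl fun l _ => ?_
    rw [Finset.mul_sum, Finset.mul_sum]
    refine Finset.sum_congr rfl fun i _ => ?_
    simp only [List.map_cons, List.prod_cons, smul_mul_assoc, mul_smul_comm, mul_assoc]
  -- the determinant terms
  have hdet0 : ∀ (l : Fin (2*m)) (i : Fin m), ¬(l = k ∧ i = i0) →
      b.det (fun t : Fin (2*m) =>
        (b k' :: b l :: LAux e e' i).get (Fin.cast (hlen l i).symm t)) = 0 := by
    intro l i hli
    have hk'val : (k':ℕ) = 2*((k:ℕ)/2) + 1 - (k:ℕ)%2 := rfl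
    have hi0val : (i0:ℕ) = (k:ℕ)/2 := rfl
    by_cases hii : i = i0
    · have hlk : l ≠ k := fun h => hli ⟨h, hii⟩
      have hlkv : (l:ℕ) ≠ (k:ℕ) := fun h => hlk (Fin.ext h)
      by_cases hlk' : l = k'
      · refine det_get_eq_zero b _ (hlen l i)
          ⟨0, by simp⟩ ⟨1, by simp⟩ (fun h => by simpa using congrArg Fin.val h) ?_
        rw [get_cons_cons_zero, get_cons_cons_one, hlk']
      · have hlk'v : (l:ℕ) ≠ (k':ℕ) := fun h => hlk' (Fin.ext h)
        have hiv : (i:ℕ) = (k:ℕ)/2 := by rw [hii]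
        have hmem : b l ∈ LAux e e' i := by
          rw [mem_LAux b rfl e e' he he' i l, hiv]
          omega
        obtain ⟨q, hq2, hqv⟩ := get_pos_of_mem (x := b k') (y := b l) hmem
        refine det_get_eq_zero b _ (hlen l i)
          ⟨1, by simp⟩ q (fun h => by have := congrArg Fin.val h; simp at this; omega) ?_
        rw [get_cons_cons_one, hqv]
    · have hiiv : (i:ℕ) ≠ (k:ℕ)/2 := fun h => hii (Fin.ext (h.trans hi0val.symm))
      have hmem : b k' ∈ LAux e e' i := by
        rw [mem_LAux b rfl e e' he he' i k']
        omega
      obtain ⟨q, hq2, hqv⟩ := get_pos_of_mem (x := b k') (y := b l) hmem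
      refine det_get_eq_zero b _ (hlen l i)
        ⟨0, by simp⟩ q (fun h => by have := congrArg Fin.val h; simp at this; omega) ?_
      rw [get_cons_cons_zero, hqv]
  have hdet1 : b.det (fun t : Fin (2*m) =>
      (b k' :: b k :: LAux e e' i0).get (Fin.cast (hlen k i0).symm t)) ≠ 0 := by
    have hk'val : (k':ℕ) = 2*((k:ℕ)/2) + 1 - (k:ℕ)%2 := rfl
    have hi0val : (i0:ℕ) = (k:ℕ)/2 := rfl
    refine det_ne_zero_of_perm b _ (hlen k i0) ?_ ?_
    · intro x hx
      rcases List.mem_cons.mp hx with h | hx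
      · exact ⟨k', h.symm⟩
      rcases List.mem_cons.mp hx with h | hx
      · exact ⟨k, h.symm⟩
      · exact LAux_mem_range b rfl e e' he he' i0 x hx
    · intro r
      by_cases hr1 : r = k'
      · subst hr1; exact List.mem_cons_self
      by_cases hr2 : r = k
      · subst hr2; exact List.mem_cons.mpr (Or.inr (List.mem_cons_self))
      · refine List.mem_cons.mpr (Or.inr (List.mem_cons.mpr (Or.inr ?_)))
        rw [mem_LAux b rfl e e' he he' i0 r]
        have hrv1 : (r:ℕ) ≠ (k':ℕ) := fun h => hr1 (Fin.ext h)
        have hrv2 : (r:ℕ) ≠ (k:ℕ) := fun h => hr2 (Fin.ext h)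
        rw [hi0val]
        omega
  -- apply the functional
  have hz : ExteriorAlgebra.ι ℝ (b k') * (ExteriorAlgebra.ι ℝ ξ *
      (∑ i : Fin m, ((LAux e e' i).map (ExteriorAlgebra.ι ℝ)).prod)) = 0 := by
    rw [← hμ, h0, mul_zero]
  rw [hexp] at hz
  have hz2 := congrArg (liftAlternating (R := ℝ) (M := Module.Dual ℝ V) (gAux b)) hz
  rw [map_zero, map_sum] at hz2
  simp only [map_sum, map_smul] at hz2
  have hz3 : ∑ l, ∑ i : Fin m, b.repr ξ l •
      b.det (fun t : Fin (2*m) =>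
        (b k' :: b l :: LAux e e' i).get (Fin.cast (hlen l i).symm t)) = 0 := by
    rw [← hz2]
    refine Finset.sum_congr rfl fun l _ => Finset.sum_congr rfl fun i _ => ?_
    rw [FAux_prod b _ (hlen l i)]
  rw [Finset.sum_eq_single k] at hz3
  · rw [Finset.sum_eq_single i0] at hz3
    · rw [smul_eq_mul] at hz3
      exact (mul_ne_zero hk hdet1) hz3
    · intro i _ hi
      rw [hdet0 k i (fun h => hi h.2), smul_zero]
    · intro h; exact absurd (Finset.mem_univ i0) h
  · intro l _ hl
    refine Finset.sum_eq_zero fun i _ => ?_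
    rw [hdet0 l i (fun h => hl h.1), smul_zero]
  · intro h; exact absurd (Finset.mem_univ k) h
end

section
/- Let μ be a nonzero exterior p-form on an n-dimensional real vector space V, where 1 ≤ p ≤ n, and let r be the rank of μ. Then p ≤ r ≤ n, r ≠ p + 1, and r = p holds if and only if μ is decomposable. -/
open Function

section Helpers

lemma succAbove_val' {n : ℕ} (p : Fin (n+1)) (i : Fin n) :
    ((p.succAbove i : Fin (n+1)) : ℕ) = if (i : ℕ) < (p : ℕ) then (i : ℕ) else (i : ℕ) + 1 := by
  rcases lt_or_ge (i.castSucc) p with h | h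
  · rw [Fin.succAbove_of_castSucc_lt _ _ h, if_pos (by simpa [Fin.lt_def] using h)]
    simp
  · rw [Fin.succAbove_of_le_castSucc _ _ h, if_neg (by simp [Fin.le_def] at h ⊢; omega)]
    simp

lemma neg_pow_mul' (j k : ℕ) : (-1:ℝ)^j * (-1:ℝ)^k = if (j+k) % 2 = 0 then 1 else -1 := by
  rw [← pow_add]
  rcases Nat.even_or_odd (j+k) with h|h
  · rw [h.neg_one_pow, if_pos (Nat.even_iff.mp h)]
  · rw [h.neg_one_pow, if_neg (by simpa [Nat.odd_iff] using h)]

lemma key_pair {q : ℕ} (b : Fin (q+2)) (a₁ : Fin (q+1)) :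
    ∃ b₁ : Fin (q+1), (b.succAbove a₁).succAbove b₁ = b ∧
      (∀ m : Fin q, (b.succAbove a₁).succAbove (b₁.succAbove m) = b.succAbove (a₁.succAbove m)) ∧
      ((-1:ℝ)^((b.succAbove a₁ : Fin (q+2)):ℕ) * (-1)^((a₁:ℕ))
        = -((-1:ℝ)^((b:ℕ)) * (-1)^((b₁:ℕ)))) := by
  rcases lt_or_ge ((a₁:ℕ)) ((b:ℕ)) with h | h
  · have hb1 : (b:ℕ) - 1 < q + 1 := by omega
    refine ⟨⟨(b:ℕ) - 1, hb1⟩, ?_, ?_, ?_⟩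
    · apply Fin.ext
      simp only [succAbove_val']
      split_ifs <;> omega
    · intro m
      apply Fin.ext
      simp only [succAbove_val']
      split_ifs <;> omega
    · rw [neg_pow_mul', neg_pow_mul']
      simp only [succAbove_val']
      split_ifs <;> first | omega | norm_num
  · have hb1 : (b:ℕ) < q + 1 := by omega
    refine ⟨⟨(b:ℕ), hb1⟩, ?_, ?_, ?_⟩
    · apply Fin.ext
      simp only [succAbove_val']
      split_ifs <;> omega
    · intro m
      apply Fin.ext
      simp only [succAbove_val']
      split_ifs <;> omega
    · rw [neg_pow_mul', neg_pow_mul']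
      simp only [succAbove_val']
      split_ifs <;> first | omega | norm_num

lemma update_eq_cons_comp_cycleRange {q : ℕ} {α : Type*} (w : α) (v : Fin (q+1) → α)
    (j : Fin (q+1)) :
    Function.update v j w = (Fin.cons w (v ∘ j.succAbove)) ∘ j.cycleRange := by
  funext k
  by_cases hk : k = j
  · subst hk
    simp [Fin.cycleRange_self]
  · rw [Function.update_of_ne hk]
    have h0 : j.cycleRange k ≠ 0 := by
      rw [← Fin.cycleRange_self j]
      exact fun h => hk (j.cycleRange.injective h)
    obtain ⟨m, hm⟩ := Fin.eq_succ_of_ne_zero h0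
    have : j.succAbove m = k := by
      have := Fin.cycleRange_symm_succ j m
      rw [← hm] at this
      simpa using this.symm
    simp [hm, Fin.cons_succ, this]

lemma kill_update {W : Type*} [AddCommGroup W] [Module ℝ W] {q : ℕ} (ν : W [⋀^Fin (q+1)]→ₗ[ℝ] ℝ) (w : W)
    (hw : ∀ u : Fin q → W, ν (Fin.cons w u) = 0)
    (v : Fin (q+1) → W) (j : Fin (q+1)) : ν (Function.update v j w) = 0 := by
  rw [update_eq_cons_comp_cycleRange, ν.map_perm, hw, smul_zero]

lemma shift_invariant {W : Type*} [AddCommGroup W] [Module ℝ W] {q : ℕ} (ν : W [⋀^Fin (q+1)]→ₗ[ℝ] ℝ) (w : W)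
    (hw : ∀ u : Fin q → W, ν (Fin.cons w u) = 0)
    (v : Fin (q+1) → W) (c : Fin (q+1) → ℝ) :
    ν (fun k => v k + c k • w) = ν v := by
  suffices H : ∀ (s : Finset (Fin (q+1))) (v : Fin (q+1) → W) (c : Fin (q+1) → ℝ),
      (∀ k ∉ s, c k = 0) → ν (fun k => v k + c k • w) = ν v by
    exact H Finset.univ v c (by simp)
  intro s
  induction s using Finset.induction_on with
  | empty => intro v c hc; simp [hc]
  | @insert a s ha ih =>
      intro v c hc
      have h1 : (fun k => v k + c k • w)
          = fun k => (Function.update v a (v a + c a • w)) k + (Function.update c a 0) k • w := by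
        funext k
        by_cases hk : k = a
        · subst hk; simp
        · simp [Function.update_of_ne hk]
      rw [h1, ih _ _ (fun k hk => by
        by_cases hk' : k = a
        · subst hk'; simp
        · rw [Function.update_of_ne hk']
          exact hc k (by simp [hk, hk']))]
      rw [ν.map_update_add, ν.map_update_smul, kill_update ν w hw, smul_zero, add_zero,
        Function.update_eq_self]

lemma exists_sort_perm {q m : ℕ} (v : Fin q → Fin m) (hv : Injective v) :
    ∃ (u : Fin q → Fin m) (σ : Equiv.Perm (Fin q)), StrictMono u ∧ v = u ∘ σ := by
  refine ⟨v ∘ Tuple.sort v, (Tuple.sort v)⁻¹, ?_, ?_⟩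
  · exact (Tuple.monotone_sort v).strictMono_of_injective (hv.comp (Equiv.injective _))
  · funext x
    simp [Function.comp]

lemma strictMono_eq_succAbove {q : ℕ} (u : Fin q → Fin (q+1)) (hu : StrictMono u) :
    ∃ i : Fin (q+1), u = i.succAbove := by
  have hinj : Injective u := hu.injective
  have hns : ¬ Surjective u := by
    intro hs
    have := Fintype.card_le_of_surjective u hs
    simp at this
  obtain ⟨i, hi⟩ := not_forall.mp hns
  push_neg at hi
  refine ⟨i, ?_⟩
  have himg : Finset.univ.image u = ({i}ᶜ : Finset (Fin (q+1))) := by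
    apply Finset.eq_of_subset_of_card_le
    · intro x hx
      obtain ⟨k, _, rfl⟩ := Finset.mem_image.mp hx
      simp [Finset.mem_compl]
      exact fun h => hi k h
    · rw [Finset.card_compl, Finset.card_singleton, Finset.card_image_of_injective _ hinj]
      simp
  have hrange : Set.range u = Set.range i.succAbove := by
    rw [Fin.range_succAbove]
    ext x
    constructor
    · rintro ⟨k, rfl⟩
      exact fun hx => hi k (by simpa using hx)
    · intro hx
      have : x ∈ Finset.univ.image u := by
        rw [himg]; simpa [Finset.mem_compl] using hx
      obtain ⟨k, _, rfl⟩ := Finset.mem_image.mp this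
      exact ⟨k, rfl⟩
  haveI : WellFoundedLT (Fin q) := Finite.to_wellFoundedLT
  exact (hu.range_inj (Fin.strictMono_succAbove i)).mp hrange

/-- decompose a strict mono `Fin q → Fin (q+2)` as a double `succAbove`. -/
lemma strictMono_eq_double_succAbove {q : ℕ} (u : Fin q → Fin (q+2)) (hu : StrictMono u) :
    ∃ (b : Fin (q+2)) (a₁ : Fin (q+1)), u = b.succAbove ∘ a₁.succAbove := by
  have hinj : Injective u := hu.injective
  have hns : ¬ Surjective u := by
    intro hs
    have := Fintype.card_le_of_surjective u hs
    simp at this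
  obtain ⟨b, hb⟩ := not_forall.mp hns
  push_neg at hb
  have hub : ∀ m, u m ≠ b := fun m h => hb m h
  -- u' m := predAbove through b
  obtain ⟨u', hu'⟩ : ∃ u' : Fin q → Fin (q+1), u = b.succAbove ∘ u' := by
    choose u' hu' using fun m => Fin.exists_succAbove_eq (hub m)
    exact ⟨u', by funext m; exact (hu' m).symm⟩
  have hu'mono : StrictMono u' := by
    intro x y hxy
    have := hu hxy
    rw [hu'] at this
    simpa [Fin.succAbove_lt_succAbove_iff] using this
  obtain ⟨a₁, ha₁⟩ := strictMono_eq_succAbove u' hu'mono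
  exact ⟨b, a₁, by rw [hu', ha₁]⟩

lemma mem_range_double {q : ℕ} (b : Fin (q+2)) (a₁ : Fin (q+1)) (i : Fin (q+2))
    (hia : i ≠ b.succAbove a₁) (hib : i ≠ b) : ∃ m, b.succAbove (a₁.succAbove m) = i := by
  obtain ⟨j, hj⟩ := Fin.exists_succAbove_eq hib
  have hj' : j ≠ a₁ := fun h => hia (by rw [← hj, h])
  obtain ⟨m, hm⟩ := Fin.exists_succAbove_eq hj'
  exact ⟨m, by rw [hm, hj]⟩

lemma altmap_sum_apply {R M N ι α : Type*} [CommSemiring R] [AddCommMonoid M] [Module R M]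
    [AddCommMonoid N] [Module R N] (s : Finset α) (f : α → (M [⋀^ι]→ₗ[R] N)) (v : ι → M) :
    (∑ i ∈ s, f i) v = ∑ i ∈ s, f i v := by
  induction s using Finset.cons_induction with
  | empty => simp
  | cons a s ha ih => rw [Finset.sum_cons, Finset.sum_cons, AlternatingMap.add_apply, ih]

lemma exists_killing_vector {q : ℕ} (ν : (Fin (q+2) → ℝ) [⋀^Fin (q+1)]→ₗ[ℝ] ℝ) (hν : ν ≠ 0) :
    ∃ w : Fin (q+2) → ℝ, w ≠ 0 ∧ ∀ u : Fin q → (Fin (q+2) → ℝ), ν (Fin.cons w u) = 0 := by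
  classical
  set e := Pi.basisFun ℝ (Fin (q+2)) with he
  set c : Fin (q+2) → ℝ := fun i => ν (fun j => e (i.succAbove j)) with hc
  set coef : Fin (q+2) → ℝ := fun i => (-1:ℝ)^(i:ℕ) * c i with hcoef
  set w : Fin (q+2) → ℝ := ∑ i, coef i • (e i : Fin (q+2) → ℝ) with hw
  -- step 1 : some c i ≠ 0
  have hex : ∃ i, c i ≠ 0 := by
    by_contra hall
    push_neg at hall
    apply hν
    apply Module.Basis.ext_alternating e
    intro v hv
    simp only [AlternatingMap.zero_apply]
    obtain ⟨u, σ, hu, rfl⟩ := exists_sort_perm v hv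
    obtain ⟨i, rfl⟩ := strictMono_eq_succAbove u hu
    rw [show (fun k => e ((i.succAbove ∘ σ) k)) = (fun k => e (i.succAbove k)) ∘ σ from rfl,
      ν.map_perm, show ν (fun j => e (i.succAbove j)) = (0:ℝ) from hall i, smul_zero]
  -- step 2 : w kills ν
  have hkill : ∀ u : Fin q → (Fin (q+2) → ℝ), ν (Fin.cons w u) = 0 := by
    have hT : (∑ i, coef i • ν.curryLeft (e i)) = (0 : (Fin (q+2) → ℝ) [⋀^Fin q]→ₗ[ℝ] ℝ) := by
      apply Module.Basis.ext_alternating e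
      intro v hv
      simp only [AlternatingMap.zero_apply]
      obtain ⟨u, σ, hu, rfl⟩ := exists_sort_perm v hv
      rw [show (fun k => e ((u ∘ σ) k)) = (fun k => e (u k)) ∘ σ from rfl,
        AlternatingMap.map_perm]
      have main : (∑ i, coef i • ν.curryLeft (e i)) (fun k => e (u k)) = 0 := by
        obtain ⟨b, a₁, rfl⟩ := strictMono_eq_double_succAbove u hu
        obtain ⟨b₁, hb₁, hcomm, hsign⟩ := key_pair b a₁
        set a : Fin (q+2) := b.succAbove a₁ with hadef
        have hab : a ≠ b := Fin.succAbove_ne b a₁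
        have expand : (∑ i, coef i • ν.curryLeft (e i))
              (fun k => e ((b.succAbove ∘ a₁.succAbove) k))
            = ∑ i, coef i *
                ν (Fin.cons (e i) (fun k => e ((b.succAbove ∘ a₁.succAbove) k))) := by
          rw [altmap_sum_apply]
          refine Finset.sum_congr rfl fun i _ => ?_
          simp [AlternatingMap.curryLeft_apply_apply, Matrix.vecCons, smul_eq_mul]
        rw [expand]
        have hzero : ∀ i ∈ Finset.univ, i ∉ ({a, b} : Finset (Fin (q+2))) →
            coef i * ν (Fin.cons (e i) (fun k => e ((b.succAbove ∘ a₁.succAbove) k))) = 0 := by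
          intro i _ hi
          simp only [Finset.mem_insert, Finset.mem_singleton] at hi
          push_neg at hi
          obtain ⟨m, hm⟩ := mem_range_double b a₁ i hi.1 hi.2
          have : ν (Fin.cons (e i) (fun k => e ((b.succAbove ∘ a₁.succAbove) k))) = 0 := by
            apply ν.map_eq_zero_of_eq _ (i := 0) (j := m.succ)
            · simp [hm]
            · exact (Fin.succ_ne_zero m).symm
          rw [this, mul_zero]
        rw [← Finset.sum_subset (Finset.subset_univ {a, b}) hzero, Finset.sum_pair hab]
        have terma : ν (Fin.cons (e a) (fun k => e ((b.succAbove ∘ a₁.succAbove) k)))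
            = ((-1:ℝ)^((a₁:ℕ))) * c b := by
          have hvec : Fin.cons (e a) (fun k => e ((b.succAbove ∘ a₁.succAbove) k))
              = (fun j => e (b.succAbove j)) ∘ ⇑(a₁.cycleRange.symm) := by
            funext k
            induction k using Fin.cases with
            | zero => simp [Fin.cycleRange_symm_zero, hadef]
            | succ m => simp [Fin.cycleRange_symm_succ]
          rw [hvec, ν.map_perm, Equiv.Perm.sign_symm, Fin.sign_cycleRange,
            show ν (fun j => e (b.succAbove j)) = c b from rfl, Units.smul_def]
          simp only [Units.smul_def, zsmul_eq_mul]
          push_cast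
          ring
        have termb : ν (Fin.cons (e b) (fun k => e ((b.succAbove ∘ a₁.succAbove) k)))
            = ((-1:ℝ)^((b₁:ℕ))) * c a := by
          have hvec : Fin.cons (e b) (fun k => e ((b.succAbove ∘ a₁.succAbove) k))
              = (fun j => e (a.succAbove j)) ∘ ⇑(b₁.cycleRange.symm) := by
            funext k
            induction k using Fin.cases with
            | zero => simp [Fin.cycleRange_symm_zero, hb₁]
            | succ m => simp [Fin.cycleRange_symm_succ, hcomm]
          rw [hvec, ν.map_perm, Equiv.Perm.sign_symm, Fin.sign_cycleRange,
            show ν (fun j => e (a.succAbove j)) = c a from rfl, Units.smul_def]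
          simp only [Units.smul_def, zsmul_eq_mul]
          push_cast
          ring
        rw [terma, termb, hcoef]
        simp only []
        linear_combination (c a * c b) * hsign
      rw [main, smul_zero]
    intro u
    rw [show ν (Fin.cons w u) = (ν.curryLeft w) u from rfl, hw, map_sum]
    rw [Finset.sum_congr rfl fun (i : Fin (q+2)) _ =>
      (ν.curryLeft.map_smul (coef i) (e i) : ν.curryLeft (coef i • (e i : Fin (q+2) → ℝ))
        = coef i • ν.curryLeft (e i)), hT]
    rfl
  -- step 3 : w ≠ 0
  obtain ⟨i₀, hi₀⟩ := hex
  refine ⟨w, ?_, hkill⟩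
  intro hw0
  apply hi₀
  have hwi : w i₀ = coef i₀ := by
    rw [hw]
    simp [he, Pi.basisFun_apply, Finset.sum_apply, Pi.single_apply]
  rw [hw0] at hwi
  simp only [Pi.zero_apply] at hwi
  rw [hcoef] at hwi
  have h1 : ((-1:ℝ)^(i₀:ℕ)) ≠ 0 := by
    apply pow_ne_zero; norm_num
  rcases mul_eq_zero.mp hwi.symm with h | h
  · exact absurd h h1
  · exact h

lemma factor_through {q : ℕ} (ν : (Fin (q+2) → ℝ) [⋀^Fin (q+1)]→ₗ[ℝ] ℝ)
    (w : Fin (q+2) → ℝ) (hw0 : w ≠ 0)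
    (hkill : ∀ u : Fin q → (Fin (q+2) → ℝ), ν (Fin.cons w u) = 0) :
    ∃ (π : (Fin (q+2) → ℝ) →ₗ[ℝ] (Fin (q+1) → ℝ))
      (ν' : (Fin (q+1) → ℝ) [⋀^Fin (q+1)]→ₗ[ℝ] ℝ), ν = ν'.compLinearMap π := by
  classical
  obtain ⟨i₀, hi₀⟩ : ∃ i, w i ≠ 0 := by
    by_contra hall
    push_neg at hall
    exact hw0 (funext hall)
  set π : (Fin (q+2) → ℝ) →ₗ[ℝ] (Fin (q+1) → ℝ) :=
    LinearMap.pi (fun j => LinearMap.proj (i₀.succAbove j)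
      - (w (i₀.succAbove j) / w i₀) • LinearMap.proj i₀) with hπ
  set s : (Fin (q+1) → ℝ) →ₗ[ℝ] (Fin (q+2) → ℝ) :=
    ∑ j, LinearMap.smulRight (LinearMap.proj j) (Pi.single (i₀.succAbove j) (1:ℝ)) with hs
  have hsi₀ : ∀ u, s u i₀ = 0 := by
    intro u
    rw [hs]
    simp only [LinearMap.sum_apply, LinearMap.smulRight_apply, LinearMap.proj_apply,
      Finset.sum_apply, Pi.smul_apply]
    apply Finset.sum_eq_zero
    intro j _
    rw [Pi.single_eq_of_ne (Fin.ne_succAbove i₀ j), smul_zero]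
  have hsab : ∀ u j, s u (i₀.succAbove j) = u j := by
    intro u j
    rw [hs]
    simp only [LinearMap.sum_apply, LinearMap.smulRight_apply, LinearMap.proj_apply,
      Finset.sum_apply, Pi.smul_apply]
    rw [Finset.sum_eq_single j]
    · simp
    · intro b _ hb
      rw [Pi.single_eq_of_ne (fun h => hb (Fin.succAbove_right_injective h).symm), smul_zero]
    · intro h; exact absurd (Finset.mem_univ j) h
  have hkey : ∀ x : Fin (q+2) → ℝ, s (π x) = x + (-(x i₀ / w i₀)) • w := by
    intro x
    funext i
    by_cases hii : i = i₀
    · subst hii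
      rw [hsi₀]
      simp only [Pi.add_apply, Pi.smul_apply, smul_eq_mul]
      field_simp
      ring
    · obtain ⟨j, rfl⟩ := Fin.exists_succAbove_eq hii
      rw [hsab]
      simp only [hπ, LinearMap.pi_apply, LinearMap.sub_apply, LinearMap.smul_apply,
        LinearMap.proj_apply, Pi.add_apply, Pi.smul_apply, smul_eq_mul]
      field_simp
      ring
  refine ⟨π, ν.compLinearMap s, ?_⟩
  ext v
  rw [AlternatingMap.compLinearMap_apply, AlternatingMap.compLinearMap_apply]
  have : (fun i => s (π (v i))) = fun i => v i + (-(v i i₀ / w i₀)) • w := by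
    funext i; rw [hkey]
  rw [this, shift_invariant ν w hkill]

end Helpers

/-- The wedge product `ξ¹ ∧ ⋯ ∧ ξᵖ` of a family of linear functionals, as the alternating
map `(v₁, …, v_p) ↦ det [ξⁱ(v_j)]`. -/
noncomputable def wedgeFam {V : Type*} [AddCommGroup V] [Module ℝ V] {p : ℕ}
    (ξ : Fin p → Module.Dual ℝ V) : V [⋀^Fin p]→ₗ[ℝ] ℝ :=
  (Matrix.detRowAlternating).compLinearMap (LinearMap.pi ξ)

/-- For a nonzero exterior `p`-form `μ` (`1 ≤ p ≤ n`) on an `n`-dimensional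
real vector space `V`, if `r` is the rank of `μ` (the least dimension of a vector space
`W` such that `μ` is the pullback of a `p`-form on `W` under a linear map `V → W`), then
`p ≤ r ≤ n`, `r ≠ p + 1`, and `r = p` iff `μ` is decomposable. -/
theorem stmt13 (V : Type*) [AddCommGroup V] [Module ℝ V] [FiniteDimensional ℝ V]
    (p : ℕ) (hp1 : 1 ≤ p) (hpn : p ≤ Module.finrank ℝ V)
    (μ : V [⋀^Fin p]→ₗ[ℝ] ℝ) (hμ0 : μ ≠ 0) (r : ℕ)
    (hr : IsLeast {k : ℕ | ∃ (f : V →ₗ[ℝ] (Fin k → ℝ))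
        (ν : (Fin k → ℝ) [⋀^Fin p]→ₗ[ℝ] ℝ), μ = ν.compLinearMap f} r) :
    p ≤ r ∧ r ≤ Module.finrank ℝ V ∧ r ≠ p + 1 ∧
      (r = p ↔ ∃ ξ : Fin p → Module.Dual ℝ V, μ = wedgeFam ξ) := by
  classical
  obtain ⟨q, rfl⟩ : ∃ q, p = q + 1 := ⟨p - 1, (Nat.succ_pred_eq_of_pos hp1).symm⟩
  -- p ≤ r
  have hpr : q + 1 ≤ r := by
    by_contra hcon
    push_neg at hcon
    obtain ⟨f, ν, hμν⟩ := hr.1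
    apply hμ0
    ext v
    rw [hμν, AlternatingMap.compLinearMap_apply]
    apply ν.map_linearDependent
    intro hli
    have := hli.fintype_card_le_finrank
    rw [Module.finrank_fin_fun, Fintype.card_fin] at this
    omega
  refine ⟨hpr, ?_, ?_, ?_⟩
  -- r ≤ n
  · apply hr.2
    set n := Module.finrank ℝ V
    set b : Module.Basis (Fin n) ℝ V := Module.finBasis ℝ V with hb
    refine ⟨b.equivFun, μ.compLinearMap (b.equivFun.symm : (Fin n → ℝ) →ₗ[ℝ] V), ?_⟩
    ext v
    simp only [AlternatingMap.compLinearMap_apply, LinearEquiv.coe_coe,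
      LinearEquiv.symm_apply_apply]
  -- r ≠ p + 1
  · intro hrp
    subst hrp
    obtain ⟨f, ν, hμν⟩ := hr.1
    have hν0 : ν ≠ 0 := by
      intro h
      apply hμ0
      rw [hμν, h]
      ext v
      simp
    obtain ⟨w, hw0, hkill⟩ := exists_killing_vector (q := q) ν hν0
    obtain ⟨π, ν', hν'⟩ := factor_through ν w hw0 hkill
    have hmem : q + 1 ∈ {k : ℕ | ∃ (f : V →ₗ[ℝ] (Fin k → ℝ))
        (ν : (Fin k → ℝ) [⋀^Fin (q+1)]→ₗ[ℝ] ℝ), μ = ν.compLinearMap f} := by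
      refine ⟨π ∘ₗ f, ν', ?_⟩
      rw [hμν, hν', AlternatingMap.compLinearMap_assoc]
    have := hr.2 hmem
    omega
  -- iff
  · constructor
    · intro hrp
      subst hrp
      obtain ⟨f, ν, hμν⟩ := hr.1
      set e := Pi.basisFun ℝ (Fin (q+1)) with he
      set cval : ℝ := ν ⇑e with hcval
      have hν : ν = cval • e.det := AlternatingMap.eq_smul_basis_det e ν
      set ξ : Fin (q+1) → Module.Dual ℝ V :=
        Function.update (fun i => (LinearMap.proj i : (Fin (q+1) → ℝ) →ₗ[ℝ] ℝ) ∘ₗ f) 0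
          (cval • ((LinearMap.proj 0 : (Fin (q+1) → ℝ) →ₗ[ℝ] ℝ) ∘ₗ f)) with hξ
      refine ⟨ξ, ?_⟩
      ext v
      rw [hμν, AlternatingMap.compLinearMap_apply, hν]
      rw [show wedgeFam ξ v
        = Matrix.detRowAlternating (fun k => LinearMap.pi ξ (v k)) from rfl]
      set N : Matrix (Fin (q+1)) (Fin (q+1)) ℝ := Matrix.of (fun k i => f (v k) i) with hN
      have hdetN : Matrix.detRowAlternating (N : Matrix (Fin (q+1)) (Fin (q+1)) ℝ)
          = N.det := rfl
      have hM : (fun k => LinearMap.pi ξ (v k))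
          = N.updateCol 0 (cval • (fun k => N k 0)) := by
        funext k i
        by_cases hi : i = 0
        · subst hi
          simp [Matrix.updateCol_apply, hξ, hN]
        · simp [Matrix.updateCol_apply, hi, hξ, hN, Function.update_of_ne hi]
      rw [hM, show Matrix.detRowAlternating (N.updateCol 0 (cval • fun k => N k 0))
          = (N.updateCol 0 (cval • fun k => N k 0)).det from rfl,
        Matrix.det_updateCol_smul, Matrix.updateCol_eq_self]
      rw [AlternatingMap.smul_apply, he, Pi.basisFun_det, smul_eq_mul]
      rfl
    · rintro ⟨ξ, rfl⟩
      have hmem : q + 1 ∈ {k : ℕ | ∃ (f : V →ₗ[ℝ] (Fin k → ℝ))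
          (ν : (Fin k → ℝ) [⋀^Fin (q+1)]→ₗ[ℝ] ℝ), wedgeFam ξ = ν.compLinearMap f} :=
        ⟨LinearMap.pi ξ, Matrix.detRowAlternating, rfl⟩
      exact le_antisymm (hr.2 hmem) hpr
end

section
/- Let μ be a nonzero exterior p-form on an n-dimensional real vector space V, where 1 ≤ p ≤ n, let r be the rank of μ, and let Z be the kernel of μ. Then dim Z = n − r. -/
section Aux

variable {V : Type*} [AddCommGroup V] [Module ℝ V] {q : ℕ}

lemma aux_zero0 (μ : V [⋀^Fin (q + 1)]→ₗ[ℝ] ℝ) {z : V}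
    (hz : z ∈ LinearMap.ker μ.curryLeft) (m : Fin (q + 1) → V) (hm : m 0 = z) :
    μ m = 0 := by
  have h1 : μ m = μ.curryLeft (m 0) (Fin.tail m) := by
    rw [AlternatingMap.curryLeft_apply_apply]
    exact congrArg μ (Fin.cons_self_tail m).symm
  rw [h1, hm]
  have h2 : μ.curryLeft z = 0 := hz
  rw [h2]
  rfl

lemma aux_zero (μ : V [⋀^Fin (q + 1)]→ₗ[ℝ] ℝ) {z : V}
    (hz : z ∈ LinearMap.ker μ.curryLeft) (m : Fin (q + 1) → V) (i : Fin (q + 1))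
    (hm : m i = z) : μ m = 0 := by
  by_cases hi : i = 0
  · exact aux_zero0 μ hz m (hi ▸ hm)
  · have hswap : μ (m ∘ Equiv.swap i 0) = -μ m := μ.map_swap m hi
    have h0 : (m ∘ Equiv.swap i 0) 0 = z := by
      simp only [Function.comp_apply, Equiv.swap_apply_right, hm]
    have := aux_zero0 μ hz (m ∘ Equiv.swap i 0) h0
    rw [this] at hswap
    linarith

lemma aux_proj (μ : V [⋀^Fin (q + 1)]→ₗ[ℝ] ℝ) (P : V →ₗ[ℝ] V)
    (hP : ∀ v, v - P v ∈ LinearMap.ker μ.curryLeft) (m : Fin (q + 1) → V) :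
    μ (fun i => P (m i)) = μ m := by
  suffices H : ∀ j : ℕ, j ≤ q + 1 →
      μ (fun i => if (i : ℕ) < j then P (m i) else m i) = μ m by
    have := H (q + 1) le_rfl
    simpa only [Fin.is_lt, if_true] using this
  intro j hj
  induction j with
  | zero => simp
  | succ j ih =>
    have hj' : j < q + 1 := hj
    set jf : Fin (q + 1) := ⟨j, hj'⟩ with hjf
    set old : Fin (q + 1) → V := fun i => if (i : ℕ) < j then P (m i) else m i with hold
    have h1 : (fun i : Fin (q + 1) => if (i : ℕ) < j + 1 then P (m i) else m i)
        = Function.update old jf (P (m jf)) := by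
      funext i
      by_cases hij : i = jf
      · subst hij; simp [old, jf]
      · have hne : (i : ℕ) ≠ j := fun h => hij (Fin.ext h)
        rw [Function.update_of_ne hij]
        simp only [old]
        have : (i : ℕ) < j + 1 ↔ (i : ℕ) < j := by omega
        simp only [this]
    have h2 : old = Function.update old jf (m jf) := by
      funext i
      by_cases hij : i = jf
      · subst hij; simp [old, jf]
      · rw [Function.update_of_ne hij]
    have hsplit : m jf = P (m jf) + (m jf - P (m jf)) := by abel
    have key : μ old = μ (Function.update old jf (P (m jf))) := by
      conv_lhs => rw [h2, hsplit]
      rw [AlternatingMap.map_update_add]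
      have hz := aux_zero μ (hP (m jf)) (Function.update old jf (m jf - P (m jf))) jf
        (Function.update_self jf _ old)
      rw [hz, add_zero]
    rw [h1, ← key]
    exact ih (le_of_lt hj')

end Aux

/-- For a nonzero exterior `p`-form `μ` (`1 ≤ p ≤ n`, here `p = q + 1`) on an
`n`-dimensional real vector space `V`, with `r` the rank of `μ` (the least dimension of a
vector space `W` such that `μ` is the pullback of a `p`-form on `W` under some linear map
`V → W`) and `Z = {v : μ(v, ·, …, ·) = 0}` the kernel of `μ`, one has `dim Z = n - r`. -/
theorem stmt14 (V : Type*) [AddCommGroup V] [Module ℝ V] [FiniteDimensional ℝ V]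
    (q : ℕ) (hpn : q + 1 ≤ Module.finrank ℝ V)
    (μ : V [⋀^Fin (q + 1)]→ₗ[ℝ] ℝ) (hμ0 : μ ≠ 0) (r : ℕ)
    (hr : IsLeast {k : ℕ | ∃ (f : V →ₗ[ℝ] (Fin k → ℝ))
        (ν : (Fin k → ℝ) [⋀^Fin (q + 1)]→ₗ[ℝ] ℝ), μ = ν.compLinearMap f} r) :
    Module.finrank ℝ (LinearMap.ker μ.curryLeft) = Module.finrank ℝ V - r := by
  classical
  set Z : Submodule ℝ V := LinearMap.ker μ.curryLeft with hZ
  obtain ⟨C, hC⟩ := Submodule.exists_isCompl Z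
  have hsum : Module.finrank ℝ Z + Module.finrank ℝ C = Module.finrank ℝ V :=
    Submodule.finrank_add_eq_of_isCompl hC
  set k := Module.finrank ℝ C with hk
  -- upper bound : k ∈ set
  let e : C ≃ₗ[ℝ] (Fin k → ℝ) :=
    LinearEquiv.ofFinrankEq _ _ (by rw [Module.finrank_fin_fun])
  let proj : V →ₗ[ℝ] C := C.linearProjOfIsCompl Z hC.symm
  let f : V →ₗ[ℝ] (Fin k → ℝ) := (e : C →ₗ[ℝ] (Fin k → ℝ)) ∘ₗ proj
  let g : (Fin k → ℝ) →ₗ[ℝ] V := C.subtype ∘ₗ (e.symm : (Fin k → ℝ) →ₗ[ℝ] C)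
  have hgf : ∀ v : V, g (f v) = (proj v : V) := by
    intro v; simp [g, f]
  have hPZ : ∀ v : V, v - (g ∘ₗ f) v ∈ Z := by
    intro v
    rw [LinearMap.comp_apply, hgf]
    have h := Submodule.projection_add_projection_eq_self hC.symm v
    have : v - (proj v : V) = (Z.linearProjOfIsCompl C hC v : V) :=
      sub_eq_iff_eq_add.mpr (by rw [add_comm]; exact h.symm)
    rw [this]
    exact (Z.linearProjOfIsCompl C hC v).2
  have hmem : k ∈ {k : ℕ | ∃ (f : V →ₗ[ℝ] (Fin k → ℝ))
      (ν : (Fin k → ℝ) [⋀^Fin (q + 1)]→ₗ[ℝ] ℝ), μ = ν.compLinearMap f} := by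
    refine ⟨f, μ.compLinearMap g, ?_⟩
    ext m
    rw [AlternatingMap.compLinearMap_apply, AlternatingMap.compLinearMap_apply]
    have := aux_proj μ (g ∘ₗ f) hPZ m
    simpa using this.symm
  -- lower bound : every k' in the set satisfies n - dim Z ≤ k'
  have hlow : ∀ k' ∈ {k : ℕ | ∃ (f : V →ₗ[ℝ] (Fin k → ℝ))
      (ν : (Fin k → ℝ) [⋀^Fin (q + 1)]→ₗ[ℝ] ℝ), μ = ν.compLinearMap f},
      Module.finrank ℝ V - Module.finrank ℝ Z ≤ k' := by
    rintro k' ⟨f', ν', heq⟩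
    have hker : LinearMap.ker f' ≤ Z := by
      intro v hv
      rw [LinearMap.mem_ker] at hv
      have : μ.curryLeft v = 0 := by
        ext w
        rw [AlternatingMap.curryLeft_apply_apply, heq,
          AlternatingMap.compLinearMap_apply]
        refine ν'.map_coord_zero 0 ?_
        simp [hv]
      exact LinearMap.mem_ker.mpr this
    have h1 : Module.finrank ℝ (LinearMap.ker f') ≤ Module.finrank ℝ Z :=
      Submodule.finrank_mono hker
    have h2 : Module.finrank ℝ (LinearMap.range f') + Module.finrank ℝ (LinearMap.ker f')
        = Module.finrank ℝ V := LinearMap.finrank_range_add_finrank_ker f'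
    have h3 : Module.finrank ℝ (LinearMap.range f') ≤ k' := by
      have := Submodule.finrank_le (LinearMap.range f')
      rwa [Module.finrank_fin_fun] at this
    omega
  have hub : r ≤ k := hr.2 hmem
  have hlb : Module.finrank ℝ V - Module.finrank ℝ Z ≤ r := hlow r hr.1
  omega
end

section
/- Let V be a six-dimensional real vector space with basis e₁, …, e₆, let ξ¹, …, ξ⁶ be the dual basis of V*, and let μ = ξ¹ ∧ ξ² ∧ ξ³ + ξ³ ∧ ξ⁴ ∧ ξ⁵ + ξ⁵ ∧ ξ⁶ ∧ ξ¹ + ξ² ∧ ξ⁴ ∧ ξ⁶. Let J₀ : V → V be the linear map determined by J₀e₄ = e₁, J₀e₁ = −e₄, J₀e₆ = e₃, J₀e₃ = −e₆, J₀e₂ = e₅, J₀e₅ = −e₂. Then J₀ and −J₀ are the only linear maps J : V → V with J∘J = −id_V satisfying μ(Ju, Jv, w) = −μ(u, v, w) for all u, v, w ∈ V. -/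
set_option maxHeartbeats 8000000


private lemma wedge3 {V : Type*} [AddCommGroup V] [Module ℝ V]
    (f g h : Module.Dual ℝ V) (x y z : V) :
    wedgeFam ![f,g,h] ![x,y,z] =
      f x * g y * h z - f x * g z * h y - f y * g x * h z
        + f y * g z * h x + f z * g x * h y - f z * g y * h x := by
  simp only [wedgeFam, AlternatingMap.compLinearMap_apply]
  show Matrix.det (Matrix.of fun i j => ![f,g,h] j (![x,y,z] i)) = _
  rw [Matrix.det_fin_three]
  simp [Matrix.of_apply]
  ring

/-- Let `V` be six-dimensional with basis `e₁, …, e₆`, dual basis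
`ξ¹, …, ξ⁶`, and `μ = ξ¹∧ξ²∧ξ³ + ξ³∧ξ⁴∧ξ⁵ + ξ⁵∧ξ⁶∧ξ¹ + ξ²∧ξ⁴∧ξ⁶` (0-based indices
below). Let `J₀` be determined by `J₀e₄ = e₁, J₀e₁ = -e₄, J₀e₆ = e₃, J₀e₃ = -e₆,
J₀e₂ = e₅, J₀e₅ = -e₂`. Then `J₀` and `-J₀` are the only linear maps `J` with
`J∘J = -id` and `μ(Ju, Jv, w) = -μ(u, v, w)` for all `u, v, w`. -/
theorem stmt19 (V : Type*) [AddCommGroup V] [Module ℝ V] [FiniteDimensional ℝ V]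
    (hdim : Module.finrank ℝ V = 6) (e : Module.Basis (Fin 6) ℝ V) :
    ∀ J : V →ₗ[ℝ] V,
      (J ∘ₗ J = -LinearMap.id ∧
        ∀ u v w : V,
          (wedgeFam ![e.dualBasis 0, e.dualBasis 1, e.dualBasis 2]
            + wedgeFam ![e.dualBasis 2, e.dualBasis 3, e.dualBasis 4]
            + wedgeFam ![e.dualBasis 4, e.dualBasis 5, e.dualBasis 0]
            + wedgeFam ![e.dualBasis 1, e.dualBasis 3, e.dualBasis 5]) ![J u, J v, w]
          = -((wedgeFam ![e.dualBasis 0, e.dualBasis 1, e.dualBasis 2]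
            + wedgeFam ![e.dualBasis 2, e.dualBasis 3, e.dualBasis 4]
            + wedgeFam ![e.dualBasis 4, e.dualBasis 5, e.dualBasis 0]
            + wedgeFam ![e.dualBasis 1, e.dualBasis 3, e.dualBasis 5]) ![u, v, w]))
      ↔ (J = e.constr ℝ ![-(e 3), e 4, -(e 5), e 0, -(e 1), e 2]
          ∨ J = -(e.constr ℝ ![-(e 3), e 4, -(e 5), e 0, -(e 1), e 2])) := by
  intro J
  constructor
  · rintro ⟨hJ2, hμ⟩
    have hJJ : ∀ v : V, J (J v) = -v := by
      intro v
      have h := LinearMap.ext_iff.mp hJ2 v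
      simpa using h
    obtain ⟨α, hαd⟩ : ∃ a, e.repr (J (e 0)) 0 = a := ⟨_, rfl⟩
    obtain ⟨β, hβd⟩ : ∃ a, e.repr (J (e 3)) 0 = a := ⟨_, rfl⟩
    have E0 : (2 : ℝ) * e.repr (J (e 0)) 2 = 0 := by
      have h := hμ (e 0) (J (e 0)) (e 1)
      rw [hJJ] at h
      simp only [AlternatingMap.add_apply, wedge3, map_neg, Module.Basis.dualBasis_apply_self] at h
      simp at h
      first
      | linarith [h]
      | linear_combination -h
      | linear_combination h
    have E1 : (-2 : ℝ) * e.repr (J (e 0)) 1 = 0 := by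
      have h := hμ (e 0) (J (e 0)) (e 2)
      rw [hJJ] at h
      simp only [AlternatingMap.add_apply, wedge3, map_neg, Module.Basis.dualBasis_apply_self] at h
      simp at h
      first
      | linarith [h]
      | linear_combination -h
      | linear_combination h
    have E2 : (2 : ℝ) * e.repr (J (e 0)) 5 = 0 := by
      have h := hμ (e 0) (J (e 0)) (e 4)
      rw [hJJ] at h
      simp only [AlternatingMap.add_apply, wedge3, map_neg, Module.Basis.dualBasis_apply_self] at h
      simp at h
      first
      | linarith [h]
      | linear_combination -h
      | linear_combination h
    have E3 : (-2 : ℝ) * e.repr (J (e 0)) 4 = 0 := by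
      have h := hμ (e 0) (J (e 0)) (e 5)
      rw [hJJ] at h
      simp only [AlternatingMap.add_apply, wedge3, map_neg, Module.Basis.dualBasis_apply_self] at h
      simp at h
      first
      | linarith [h]
      | linear_combination -h
      | linear_combination h
    have E4 : (1 : ℝ) * e.repr (J (e 1)) 2 = 0 := by
      have h := hμ (e 0) (J (e 1)) (e 1)
      rw [hJJ] at h
      simp only [AlternatingMap.add_apply, wedge3, map_neg, Module.Basis.dualBasis_apply_self] at h
      simp at h
      first
      | linarith [h]
      | linear_combination -h
      | linear_combination h
    have E5 : (1 : ℝ) * e.repr (J (e 0)) 0 + (-1 : ℝ) * e.repr (J (e 1)) 1 = 0 := by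
      have h := hμ (e 0) (J (e 1)) (e 2)
      rw [hJJ] at h
      simp only [AlternatingMap.add_apply, wedge3, map_neg, Module.Basis.dualBasis_apply_self] at h
      simp at h
      first
      | linarith [h]
      | linear_combination -h
      | linear_combination h
    have E6 : (1 : ℝ) * e.repr (J (e 1)) 5 = 0 := by
      have h := hμ (e 0) (J (e 1)) (e 4)
      rw [hJJ] at h
      simp only [AlternatingMap.add_apply, wedge3, map_neg, Module.Basis.dualBasis_apply_self] at h
      simp at h
      first
      | linarith [h]
      | linear_combination -h
      | linear_combination h
    have E7 : (-1 : ℝ) * e.repr (J (e 0)) 3 + (-1 : ℝ) * e.repr (J (e 1)) 4 = 0 := by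
      have h := hμ (e 0) (J (e 1)) (e 5)
      rw [hJJ] at h
      simp only [AlternatingMap.add_apply, wedge3, map_neg, Module.Basis.dualBasis_apply_self] at h
      simp at h
      first
      | linarith [h]
      | linear_combination -h
      | linear_combination h
    have E8 : (-1 : ℝ) * e.repr (J (e 0)) 0 + (1 : ℝ) * e.repr (J (e 2)) 2 = 0 := by
      have h := hμ (e 0) (J (e 2)) (e 1)
      rw [hJJ] at h
      simp only [AlternatingMap.add_apply, wedge3, map_neg, Module.Basis.dualBasis_apply_self] at h
      simp at h
      first
      | linarith [h]
      | linear_combination -h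
      | linear_combination h
    have E9 : (-1 : ℝ) * e.repr (J (e 2)) 1 = 0 := by
      have h := hμ (e 0) (J (e 2)) (e 2)
      rw [hJJ] at h
      simp only [AlternatingMap.add_apply, wedge3, map_neg, Module.Basis.dualBasis_apply_self] at h
      simp at h
      first
      | linarith [h]
      | linear_combination -h
      | linear_combination h
    have E10 : (-1 : ℝ) * e.repr (J (e 0)) 3 + (1 : ℝ) * e.repr (J (e 2)) 5 = 0 := by
      have h := hμ (e 0) (J (e 2)) (e 4)
      rw [hJJ] at h
      simp only [AlternatingMap.add_apply, wedge3, map_neg, Module.Basis.dualBasis_apply_self] at h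
      simp at h
      first
      | linarith [h]
      | linear_combination -h
      | linear_combination h
    have E11 : (-1 : ℝ) * e.repr (J (e 2)) 4 = 0 := by
      have h := hμ (e 0) (J (e 2)) (e 5)
      rw [hJJ] at h
      simp only [AlternatingMap.add_apply, wedge3, map_neg, Module.Basis.dualBasis_apply_self] at h
      simp at h
      first
      | linarith [h]
      | linear_combination -h
      | linear_combination h
    have E12 : (1 : ℝ) * e.repr (J (e 3)) 2 + (-1 : ℝ) * e.repr (J (e 0)) 5 = 0 := by
      have h := hμ (e 0) (J (e 3)) (e 1)
      rw [hJJ] at h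
      simp only [AlternatingMap.add_apply, wedge3, map_neg, Module.Basis.dualBasis_apply_self] at h
      simp at h
      first
      | linarith [h]
      | linear_combination -h
      | linear_combination h
    have E13 : (-1 : ℝ) * e.repr (J (e 3)) 1 + (-1 : ℝ) * e.repr (J (e 0)) 4 = 0 := by
      have h := hμ (e 0) (J (e 3)) (e 2)
      rw [hJJ] at h
      simp only [AlternatingMap.add_apply, wedge3, map_neg, Module.Basis.dualBasis_apply_self] at h
      simp at h
      first
      | linarith [h]
      | linear_combination -h
      | linear_combination h
    have E14 : (1 : ℝ) * e.repr (J (e 0)) 2 + (1 : ℝ) * e.repr (J (e 3)) 5 = 0 := by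
      have h := hμ (e 0) (J (e 3)) (e 4)
      rw [hJJ] at h
      simp only [AlternatingMap.add_apply, wedge3, map_neg, Module.Basis.dualBasis_apply_self] at h
      simp at h
      first
      | linarith [h]
      | linear_combination -h
      | linear_combination h
    have E15 : (1 : ℝ) * e.repr (J (e 0)) 1 + (-1 : ℝ) * e.repr (J (e 3)) 4 = 0 := by
      have h := hμ (e 0) (J (e 3)) (e 5)
      rw [hJJ] at h
      simp only [AlternatingMap.add_apply, wedge3, map_neg, Module.Basis.dualBasis_apply_self] at h
      simp at h
      first
      | linarith [h]
      | linear_combination -h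
      | linear_combination h
    have E16 : (1 : ℝ) * e.repr (J (e 4)) 2 = 0 := by
      have h := hμ (e 0) (J (e 4)) (e 1)
      rw [hJJ] at h
      simp only [AlternatingMap.add_apply, wedge3, map_neg, Module.Basis.dualBasis_apply_self] at h
      simp at h
      first
      | linarith [h]
      | linear_combination -h
      | linear_combination h
    have E17 : (-1 : ℝ) * e.repr (J (e 4)) 1 + (1 : ℝ) * e.repr (J (e 0)) 3 = 0 := by
      have h := hμ (e 0) (J (e 4)) (e 2)
      rw [hJJ] at h
      simp only [AlternatingMap.add_apply, wedge3, map_neg, Module.Basis.dualBasis_apply_self] at h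
      simp at h
      first
      | linarith [h]
      | linear_combination -h
      | linear_combination h
    have E18 : (1 : ℝ) * e.repr (J (e 4)) 5 = 0 := by
      have h := hμ (e 0) (J (e 4)) (e 4)
      rw [hJJ] at h
      simp only [AlternatingMap.add_apply, wedge3, map_neg, Module.Basis.dualBasis_apply_self] at h
      simp at h
      first
      | linarith [h]
      | linear_combination -h
      | linear_combination h
    have E19 : (1 : ℝ) * e.repr (J (e 0)) 0 + (-1 : ℝ) * e.repr (J (e 4)) 4 = 0 := by
      have h := hμ (e 0) (J (e 4)) (e 5)
      rw [hJJ] at h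
      simp only [AlternatingMap.add_apply, wedge3, map_neg, Module.Basis.dualBasis_apply_self] at h
      simp at h
      first
      | linarith [h]
      | linear_combination -h
      | linear_combination h
    have E20 : (1 : ℝ) * e.repr (J (e 5)) 2 + (1 : ℝ) * e.repr (J (e 0)) 3 = 0 := by
      have h := hμ (e 0) (J (e 5)) (e 1)
      rw [hJJ] at h
      simp only [AlternatingMap.add_apply, wedge3, map_neg, Module.Basis.dualBasis_apply_self] at h
      simp at h
      first
      | linarith [h]
      | linear_combination -h
      | linear_combination h
    have E21 : (-1 : ℝ) * e.repr (J (e 5)) 1 = 0 := by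
      have h := hμ (e 0) (J (e 5)) (e 2)
      rw [hJJ] at h
      simp only [AlternatingMap.add_apply, wedge3, map_neg, Module.Basis.dualBasis_apply_self] at h
      simp at h
      first
      | linarith [h]
      | linear_combination -h
      | linear_combination h
    have E22 : (-1 : ℝ) * e.repr (J (e 0)) 0 + (1 : ℝ) * e.repr (J (e 5)) 5 = 0 := by
      have h := hμ (e 0) (J (e 5)) (e 4)
      rw [hJJ] at h
      simp only [AlternatingMap.add_apply, wedge3, map_neg, Module.Basis.dualBasis_apply_self] at h
      simp at h
      first
      | linarith [h]
      | linear_combination -h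
      | linear_combination h
    have E23 : (-1 : ℝ) * e.repr (J (e 5)) 4 = 0 := by
      have h := hμ (e 0) (J (e 5)) (e 5)
      rw [hJJ] at h
      simp only [AlternatingMap.add_apply, wedge3, map_neg, Module.Basis.dualBasis_apply_self] at h
      simp at h
      first
      | linarith [h]
      | linear_combination -h
      | linear_combination h
    have E24 : (2 : ℝ) * e.repr (J (e 1)) 0 = 0 := by
      have h := hμ (e 1) (J (e 1)) (e 2)
      rw [hJJ] at h
      simp only [AlternatingMap.add_apply, wedge3, map_neg, Module.Basis.dualBasis_apply_self] at h
      simp at h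
      first
      | linarith [h]
      | linear_combination -h
      | linear_combination h
    have E25 : (-2 : ℝ) * e.repr (J (e 1)) 3 = 0 := by
      have h := hμ (e 1) (J (e 1)) (e 5)
      rw [hJJ] at h
      simp only [AlternatingMap.add_apply, wedge3, map_neg, Module.Basis.dualBasis_apply_self] at h
      simp at h
      first
      | linarith [h]
      | linear_combination -h
      | linear_combination h
    have E26 : (1 : ℝ) * e.repr (J (e 2)) 0 = 0 := by
      have h := hμ (e 1) (J (e 2)) (e 2)
      rw [hJJ] at h
      simp only [AlternatingMap.add_apply, wedge3, map_neg, Module.Basis.dualBasis_apply_self] at h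
      simp at h
      first
      | linarith [h]
      | linear_combination -h
      | linear_combination h
    have E27 : (-1 : ℝ) * e.repr (J (e 2)) 3 = 0 := by
      have h := hμ (e 1) (J (e 2)) (e 5)
      rw [hJJ] at h
      simp only [AlternatingMap.add_apply, wedge3, map_neg, Module.Basis.dualBasis_apply_self] at h
      simp at h
      first
      | linarith [h]
      | linear_combination -h
      | linear_combination h
    have E28 : (1 : ℝ) * e.repr (J (e 3)) 0 + (-1 : ℝ) * e.repr (J (e 1)) 4 = 0 := by
      have h := hμ (e 1) (J (e 3)) (e 2)
      rw [hJJ] at h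
      simp only [AlternatingMap.add_apply, wedge3, map_neg, Module.Basis.dualBasis_apply_self] at h
      simp at h
      first
      | linarith [h]
      | linear_combination -h
      | linear_combination h
    have E29 : (1 : ℝ) * e.repr (J (e 1)) 1 + (-1 : ℝ) * e.repr (J (e 3)) 3 = 0 := by
      have h := hμ (e 1) (J (e 3)) (e 5)
      rw [hJJ] at h
      simp only [AlternatingMap.add_apply, wedge3, map_neg, Module.Basis.dualBasis_apply_self] at h
      simp at h
      first
      | linarith [h]
      | linear_combination -h
      | linear_combination h
    have E30 : (1 : ℝ) * e.repr (J (e 4)) 0 + (1 : ℝ) * e.repr (J (e 1)) 3 = 0 := by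
      have h := hμ (e 1) (J (e 4)) (e 2)
      rw [hJJ] at h
      simp only [AlternatingMap.add_apply, wedge3, map_neg, Module.Basis.dualBasis_apply_self] at h
      simp at h
      first
      | linarith [h]
      | linear_combination -h
      | linear_combination h
    have E31 : (1 : ℝ) * e.repr (J (e 1)) 0 + (-1 : ℝ) * e.repr (J (e 4)) 3 = 0 := by
      have h := hμ (e 1) (J (e 4)) (e 5)
      rw [hJJ] at h
      simp only [AlternatingMap.add_apply, wedge3, map_neg, Module.Basis.dualBasis_apply_self] at h
      simp at h
      first
      | linarith [h]
      | linear_combination -h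
      | linear_combination h
    have E32 : (1 : ℝ) * e.repr (J (e 5)) 0 = 0 := by
      have h := hμ (e 1) (J (e 5)) (e 2)
      rw [hJJ] at h
      simp only [AlternatingMap.add_apply, wedge3, map_neg, Module.Basis.dualBasis_apply_self] at h
      simp at h
      first
      | linarith [h]
      | linear_combination -h
      | linear_combination h
    have E33 : (-1 : ℝ) * e.repr (J (e 5)) 3 = 0 := by
      have h := hμ (e 1) (J (e 5)) (e 5)
      rw [hJJ] at h
      simp only [AlternatingMap.add_apply, wedge3, map_neg, Module.Basis.dualBasis_apply_self] at h
      simp at h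
      first
      | linarith [h]
      | linear_combination -h
      | linear_combination h
    have F0_1 : e.repr (J (e 1)) 0 = (0 : ℝ) := by
      linear_combination (((1 : ℝ)/2)) * E24
    have F0_2 : e.repr (J (e 2)) 0 = (0 : ℝ) := by
      linear_combination ((1 : ℝ)) * E26
    have F0_4 : e.repr (J (e 4)) 0 = (0 : ℝ) := by
      linear_combination (((1 : ℝ)/2)) * E25 + ((1 : ℝ)) * E30
    have F0_5 : e.repr (J (e 5)) 0 = (0 : ℝ) := by
      linear_combination ((1 : ℝ)) * E32
    have F1_0 : e.repr (J (e 0)) 1 = (0 : ℝ) := by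
      linear_combination (((-1 : ℝ)/2)) * E1
    have F1_1 : e.repr (J (e 1)) 1 = (1 : ℝ) * α := by
      linear_combination ((-1 : ℝ)) * E5 + (1 : ℝ) * hαd
    have F1_2 : e.repr (J (e 2)) 1 = (0 : ℝ) := by
      linear_combination ((-1 : ℝ)) * E9
    have F1_3 : e.repr (J (e 3)) 1 = (0 : ℝ) := by
      linear_combination (((1 : ℝ)/2)) * E3 + ((-1 : ℝ)) * E13
    have F1_4 : e.repr (J (e 4)) 1 = (-1 : ℝ) * β := by
      linear_combination ((-1 : ℝ)) * E7 + ((-1 : ℝ)) * E17 + ((1 : ℝ)) * E28 + (-1 : ℝ) * hβd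
    have F1_5 : e.repr (J (e 5)) 1 = (0 : ℝ) := by
      linear_combination ((-1 : ℝ)) * E21
    have F2_0 : e.repr (J (e 0)) 2 = (0 : ℝ) := by
      linear_combination (((1 : ℝ)/2)) * E0
    have F2_1 : e.repr (J (e 1)) 2 = (0 : ℝ) := by
      linear_combination ((1 : ℝ)) * E4
    have F2_2 : e.repr (J (e 2)) 2 = (1 : ℝ) * α := by
      linear_combination ((1 : ℝ)) * E8 + (1 : ℝ) * hαd
    have F2_3 : e.repr (J (e 3)) 2 = (0 : ℝ) := by
      linear_combination (((1 : ℝ)/2)) * E2 + ((1 : ℝ)) * E12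
    have F2_4 : e.repr (J (e 4)) 2 = (0 : ℝ) := by
      linear_combination ((1 : ℝ)) * E16
    have F2_5 : e.repr (J (e 5)) 2 = (1 : ℝ) * β := by
      linear_combination ((1 : ℝ)) * E7 + ((1 : ℝ)) * E20 + ((-1 : ℝ)) * E28 + (1 : ℝ) * hβd
    have F3_0 : e.repr (J (e 0)) 3 = (-1 : ℝ) * β := by
      linear_combination ((-1 : ℝ)) * E7 + ((1 : ℝ)) * E28 + (-1 : ℝ) * hβd
    have F3_1 : e.repr (J (e 1)) 3 = (0 : ℝ) := by
      linear_combination (((-1 : ℝ)/2)) * E25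
    have F3_2 : e.repr (J (e 2)) 3 = (0 : ℝ) := by
      linear_combination ((-1 : ℝ)) * E27
    have F3_3 : e.repr (J (e 3)) 3 = (1 : ℝ) * α := by
      linear_combination ((-1 : ℝ)) * E5 + ((-1 : ℝ)) * E29 + (1 : ℝ) * hαd
    have F3_4 : e.repr (J (e 4)) 3 = (0 : ℝ) := by
      linear_combination (((1 : ℝ)/2)) * E24 + ((-1 : ℝ)) * E31
    have F3_5 : e.repr (J (e 5)) 3 = (0 : ℝ) := by
      linear_combination ((-1 : ℝ)) * E33
    have F4_0 : e.repr (J (e 0)) 4 = (0 : ℝ) := by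
      linear_combination (((-1 : ℝ)/2)) * E3
    have F4_1 : e.repr (J (e 1)) 4 = (1 : ℝ) * β := by
      linear_combination ((-1 : ℝ)) * E28 + (1 : ℝ) * hβd
    have F4_2 : e.repr (J (e 2)) 4 = (0 : ℝ) := by
      linear_combination ((-1 : ℝ)) * E11
    have F4_3 : e.repr (J (e 3)) 4 = (0 : ℝ) := by
      linear_combination (((-1 : ℝ)/2)) * E1 + ((-1 : ℝ)) * E15
    have F4_4 : e.repr (J (e 4)) 4 = (1 : ℝ) * α := by
      linear_combination ((-1 : ℝ)) * E19 + (1 : ℝ) * hαd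
    have F4_5 : e.repr (J (e 5)) 4 = (0 : ℝ) := by
      linear_combination ((-1 : ℝ)) * E23
    have F5_0 : e.repr (J (e 0)) 5 = (0 : ℝ) := by
      linear_combination (((1 : ℝ)/2)) * E2
    have F5_1 : e.repr (J (e 1)) 5 = (0 : ℝ) := by
      linear_combination ((1 : ℝ)) * E6
    have F5_2 : e.repr (J (e 2)) 5 = (-1 : ℝ) * β := by
      linear_combination ((-1 : ℝ)) * E7 + ((1 : ℝ)) * E10 + ((1 : ℝ)) * E28 + (-1 : ℝ) * hβd
    have F5_3 : e.repr (J (e 3)) 5 = (0 : ℝ) := by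
      linear_combination (((-1 : ℝ)/2)) * E0 + ((1 : ℝ)) * E14
    have F5_4 : e.repr (J (e 4)) 5 = (0 : ℝ) := by
      linear_combination ((1 : ℝ)) * E18
    have F5_5 : e.repr (J (e 5)) 5 = (1 : ℝ) * α := by
      linear_combination ((1 : ℝ)) * E22 + (1 : ℝ) * hαd
    have hv0 : J (e 0) = α • e 0 + -(β • e 3) := by
      conv_lhs => rw [← e.sum_repr (J (e 0))]
      rw [Fin.sum_univ_six]
      rw [hαd, F1_0, F2_0, F3_0, F4_0, F5_0]
      module
    have hv1 : J (e 1) = α • e 1 + β • e 4 := by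
      conv_lhs => rw [← e.sum_repr (J (e 1))]
      rw [Fin.sum_univ_six]
      rw [F0_1, F1_1, F2_1, F3_1, F4_1, F5_1]
      module
    have hv2 : J (e 2) = α • e 2 + -(β • e 5) := by
      conv_lhs => rw [← e.sum_repr (J (e 2))]
      rw [Fin.sum_univ_six]
      rw [F0_2, F1_2, F2_2, F3_2, F4_2, F5_2]
      module
    have hv3 : J (e 3) = β • e 0 + α • e 3 := by
      conv_lhs => rw [← e.sum_repr (J (e 3))]
      rw [Fin.sum_univ_six]
      rw [hβd, F1_3, F2_3, F3_3, F4_3, F5_3]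
      module
    have hv4 : J (e 4) = -(β • e 1) + α • e 4 := by
      conv_lhs => rw [← e.sum_repr (J (e 4))]
      rw [Fin.sum_univ_six]
      rw [F0_4, F1_4, F2_4, F3_4, F4_4, F5_4]
      module
    have hv5 : J (e 5) = β • e 2 + α • e 5 := by
      conv_lhs => rw [← e.sum_repr (J (e 5))]
      rw [Fin.sum_univ_six]
      rw [F0_5, F1_5, F2_5, F3_5, F4_5, F5_5]
      module
    have hq := hJJ (e 0)
    rw [hv0] at hq
    simp only [map_add, map_neg, map_smul] at hq
    rw [hv0, hv3] at hq
    have q0 : α * α - β * β = -1 := by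
      have h := congrArg (e.dualBasis 0) hq
      simp [smul_smul, Module.Basis.dualBasis_apply_self] at h
      linarith
    have q3 : α * β = 0 := by
      have h := congrArg (e.dualBasis 3) hq
      simp [smul_smul, Module.Basis.dualBasis_apply_self] at h
      linarith
    rcases mul_eq_zero.mp q3 with hαz | hβz
    · have hβ2 : (β - 1) * (β + 1) = 0 := by
        linear_combination (-1 : ℝ) * q0 + α * hαz
      rcases mul_eq_zero.mp hβ2 with h1 | h2
      · have hβ1 : β = 1 := by linarith
        left
        have g0 : J (e 0) = -(e 3) := by
          rw [hv0, hαz, hβ1]; module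
        have g1 : J (e 1) = e 4 := by
          rw [hv1, hαz, hβ1]; module
        have g2 : J (e 2) = -(e 5) := by
          rw [hv2, hαz, hβ1]; module
        have g3 : J (e 3) = e 0 := by
          rw [hv3, hαz, hβ1]; module
        have g4 : J (e 4) = -(e 1) := by
          rw [hv4, hαz, hβ1]; module
        have g5 : J (e 5) = e 2 := by
          rw [hv5, hαz, hβ1]; module
        refine e.ext fun i => ?_
        fin_cases i <;>
          simp [Module.Basis.constr_basis, g0, g1, g2, g3, g4, g5, Matrix.cons_val_succ] <;>
          try rfl
      · have hβ1 : β = -1 := by linarith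
        right
        have g0 : J (e 0) = e 3 := by
          rw [hv0, hαz, hβ1]; module
        have g1 : J (e 1) = -(e 4) := by
          rw [hv1, hαz, hβ1]; module
        have g2 : J (e 2) = e 5 := by
          rw [hv2, hαz, hβ1]; module
        have g3 : J (e 3) = -(e 0) := by
          rw [hv3, hαz, hβ1]; module
        have g4 : J (e 4) = e 1 := by
          rw [hv4, hαz, hβ1]; module
        have g5 : J (e 5) = -(e 2) := by
          rw [hv5, hαz, hβ1]; module
        refine e.ext fun i => ?_
        fin_cases i <;>
          simp [LinearMap.neg_apply, Module.Basis.constr_basis, g0, g1, g2, g3, g4, g5,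
            Matrix.cons_val_succ] <;>
          try rfl
    · exfalso
      have hsq : α * α = -1 := by linear_combination q0 + β * hβz
      have hnn : (0:ℝ) ≤ α * α := mul_self_nonneg α
      linarith
  · intro hJ
    set J₀ : V →ₗ[ℝ] V := e.constr ℝ ![-(e 3), e 4, -(e 5), e 0, -(e 1), e 2] with hJdef
    have c0 : J₀ (e 0) = -(e 3) := by rw [hJdef]; simp [Module.Basis.constr_basis]
    have c1 : J₀ (e 1) = e 4 := by rw [hJdef]; simp [Module.Basis.constr_basis]
    have c2 : J₀ (e 2) = -(e 5) := by rw [hJdef]; simp [Module.Basis.constr_basis]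
    have c3 : J₀ (e 3) = e 0 := by rw [hJdef]; simp [Module.Basis.constr_basis]
    have c4 : J₀ (e 4) = -(e 1) := by rw [hJdef]; simp [Module.Basis.constr_basis]
    have c5 : J₀ (e 5) = e 2 := by
      rw [hJdef]; simp [Module.Basis.constr_basis, Matrix.cons_val_succ]
    have hJ0u : ∀ u : V, J₀ u = e.repr u 3 • e 0 - e.repr u 4 • e 1 + e.repr u 5 • e 2
        - e.repr u 0 • e 3 + e.repr u 1 • e 4 - e.repr u 2 • e 5 := by
      intro u
      conv_lhs => rw [← e.sum_repr u]
      rw [map_sum, Fin.sum_univ_six]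
      simp only [map_smul]
      rw [c0, c1, c2, c3, c4, c5]
      module
    have hd0 : ∀ u : V, e.dualBasis 0 (J₀ u) = e.repr u 3 := by
      intro u; rw [hJ0u]; simp [Module.Basis.dualBasis_apply_self]
    have hd1 : ∀ u : V, e.dualBasis 1 (J₀ u) = -(e.repr u 4) := by
      intro u; rw [hJ0u]; simp [Module.Basis.dualBasis_apply_self]
    have hd2 : ∀ u : V, e.dualBasis 2 (J₀ u) = e.repr u 5 := by
      intro u; rw [hJ0u]; simp [Module.Basis.dualBasis_apply_self]
    have hd3 : ∀ u : V, e.dualBasis 3 (J₀ u) = -(e.repr u 0) := by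
      intro u; rw [hJ0u]; simp [Module.Basis.dualBasis_apply_self]
    have hd4 : ∀ u : V, e.dualBasis 4 (J₀ u) = e.repr u 1 := by
      intro u; rw [hJ0u]; simp [Module.Basis.dualBasis_apply_self]
    have hd5 : ∀ u : V, e.dualBasis 5 (J₀ u) = -(e.repr u 2) := by
      intro u; rw [hJ0u]; simp [Module.Basis.dualBasis_apply_self]
    have hcomp : J₀ ∘ₗ J₀ = -LinearMap.id := by
      refine e.ext fun i => ?_
      fin_cases i <;>
        simp [LinearMap.comp_apply, LinearMap.neg_apply, c0, c1, c2, c3, c4, c5, map_neg]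
    rcases hJ with rfl | rfl
    · refine ⟨hcomp, fun u v w => ?_⟩
      simp only [AlternatingMap.add_apply, wedge3, hd0, hd1, hd2, hd3, hd4, hd5,
        Module.Basis.dualBasis_apply]
      ring
    · constructor
      · rw [LinearMap.neg_comp, LinearMap.comp_neg, neg_neg]
        exact hcomp
      · intro u v w
        simp only [AlternatingMap.add_apply, wedge3, LinearMap.neg_apply, map_neg,
          hd0, hd1, hd2, hd3, hd4, hd5, Module.Basis.dualBasis_apply]
        ring
end
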